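/- arXiv:1309.7264 — 6 statements merged into one kernel-verified Lean document; each statement's English description precedes it below -/
import Mathlib

section
/- Let G=(V,E) be a finite connected undirected graph with oriented edge set Ē, grad: ℝ^V → ℝ^Ē defined by (grad x)(v,w) = x(w) − x(v), and div: ℝ^Ē → ℝ^V its negative adjoint, i.e. ⟨grad f, ξ⟩ = −⟨f, div ξ⟩. Let ℝ₀^V = {x : Σ_v x(v) = 0}, ‖x‖_TV = Σ_{e∈Ē} |(grad x)(e)|, and for u ∈ ℝ₀^V let ‖u‖_* = max{⟨x,u⟩ : ‖x‖_TV ≤ 1}. Then ‖u‖_* = inf{ ‖ξ‖_∞ : ξ ∈ ℝ^Ē, u = div ξ }, where ‖ξ‖_∞ = max_{e∈Ē} |ξ(e)|. -/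
open Finset

noncomputable section

/-- Discrete total variation. -/
def tvNorm {V : Type*} [Fintype V] (G : SimpleGraph V) [DecidableRel G.Adj]
    (x : V → ℝ) : ℝ :=
  (1 / 2) * ∑ v, ∑ w, if G.Adj v w then |x w - x v| else 0

/-- Dual norm of the TV norm on the zero-mean subspace:
`‖u‖_* = sup {⟨x,u⟩ : x zero-mean, ‖x‖_TV ≤ 1}`. -/
def dualNorm {V : Type*} [Fintype V] (G : SimpleGraph V) [DecidableRel G.Adj]
    (u : V → ℝ) : ℝ :=
  sSup {r | ∃ x : V → ℝ, (∑ v, x v = 0) ∧ tvNorm G x ≤ 1 ∧ r = ∑ v, x v * u v}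

set_option linter.unusedSectionVars false
set_option maxHeartbeats 1000000

namespace TVProof

variable {V : Type*} [Fintype V] (G : SimpleGraph V) [DecidableRel G.Adj]

lemma const_of_grad (hG : G.Preconnected) (x : V → ℝ)
    (h : ∀ v w, G.Adj v w → x w = x v) (v w : V) : x v = x w := by
  obtain ⟨p⟩ := hG v w
  induction p with
  | nil => rfl
  | cons h' p ih => exact ((h _ _ h').symm).trans ih

lemma tvNorm_nonneg (x : V → ℝ) : 0 ≤ tvNorm G x := by
  unfold tvNorm
  have : (0:ℝ) ≤ ∑ v, ∑ w, if G.Adj v w then |x w - x v| else 0 :=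
    Finset.sum_nonneg fun v _ => Finset.sum_nonneg fun w _ => by positivity
  linarith

lemma tvNorm_smul (r : ℝ) (x : V → ℝ) : tvNorm G (r • x) = |r| * tvNorm G x := by
  unfold tvNorm
  have : ∀ v w : V, (if G.Adj v w then |(r • x) w - (r • x) v| else 0)
      = |r| * (if G.Adj v w then |x w - x v| else 0) := by
    intro v w
    by_cases h : G.Adj v w
    · simp only [h, if_true, Pi.smul_apply, smul_eq_mul, ← mul_sub, abs_mul]
    · simp [h]
  simp only [this, ← Finset.mul_sum]
  ring




variable {V : Type*} [Fintype V] [DecidableEq V] (G : SimpleGraph V) [DecidableRel G.Adj]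

/-- The set of divergences of antisymmetric fields, as a submodule. -/
def divSet : Submodule ℝ (V → ℝ) where
  carrier := {u | ∃ ξ : V → V → ℝ, (∀ v w, ξ v w = -ξ w v) ∧
    ∀ v, (∑ w, if G.Adj v w then ξ v w else 0) = u v}
  zero_mem' := ⟨0, fun v w => by simp, fun v => by simp⟩
  add_mem' := by
    rintro f g ⟨ξ, h1, h2⟩ ⟨ξ', h1', h2'⟩
    refine ⟨ξ + ξ', fun v w => by simp [h1 v w, h1' v w]; ring, fun v => ?_⟩
    show (∑ w, if G.Adj v w then ξ v w + ξ' v w else 0) = f v + g v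
    rw [← h2 v, ← h2' v, ← Finset.sum_add_distrib]
    exact Finset.sum_congr rfl fun w _ => by split <;> simp
  smul_mem' := by
    rintro c f ⟨ξ, h1, h2⟩
    refine ⟨c • ξ, fun v w => by simp [h1 v w], fun v => ?_⟩
    show (∑ w, if G.Adj v w then c * ξ v w else 0) = c * f v
    rw [← h2 v, Finset.mul_sum]
    exact Finset.sum_congr rfl fun w _ => by split <;> simp

lemma edge_mem {a b : V} (hab : G.Adj a b) :
    (Pi.single b 1 - Pi.single a 1 : V → ℝ) ∈ divSet G := by
  have hne : a ≠ b := G.ne_of_adj hab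
  refine ⟨fun v w => if v = b ∧ w = a then 1 else if v = a ∧ w = b then -1 else 0,
    fun v w => ?_, fun v => ?_⟩
  · show (if v = b ∧ w = a then (1:ℝ) else if v = a ∧ w = b then -1 else 0)
        = -(if w = b ∧ v = a then (1:ℝ) else if w = a ∧ v = b then -1 else 0)
    have hsw : (if w = b ∧ v = a then (1:ℝ) else if w = a ∧ v = b then -1 else 0)
        = (if v = a ∧ w = b then (1:ℝ) else if v = b ∧ w = a then -1 else 0) := by
      simp only [@and_comm (w = b) (v = a), @and_comm (w = a) (v = b)]
    rw [hsw]
    by_cases p : v = b ∧ w = a <;> by_cases q : v = a ∧ w = b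
    · exact absurd (q.1.symm.trans p.1) hne
    · simp [p, q, hne, hne.symm]
    · simp [p, q, hne, hne.symm]
    · simp [p, q, hne, hne.symm]
  · have key : ∀ w : V, (if G.Adj v w then
        (if v = b ∧ w = a then (1:ℝ) else if v = a ∧ w = b then -1 else 0) else 0)
        = (if w = a then (if v = b then (1:ℝ) else 0) else 0)
          + (if w = b then (if v = a then (-1:ℝ) else 0) else 0) := by
      intro w
      by_cases h1 : v = b ∧ w = a
      · obtain ⟨rfl, rfl⟩ := h1; simp [hab.symm, hne, hne.symm]
      · by_cases h2 : v = a ∧ w = b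
        · obtain ⟨rfl, rfl⟩ := h2; simp [hab, hne, hne.symm]
        · have hinner : (if v = b ∧ w = a then (1:ℝ)
              else if v = a ∧ w = b then -1 else 0) = 0 := by
            rw [if_neg h1, if_neg h2]
          rw [hinner, ite_self]
          have r1 : (if w = a then (if v = b then (1:ℝ) else 0) else 0) = 0 := by
            rcases eq_or_ne w a with rfl | h
            · rw [if_pos rfl, if_neg fun hv => h1 ⟨hv, rfl⟩]
            · rw [if_neg h]
          have r2 : (if w = b then (if v = a then (-1:ℝ) else 0) else 0) = 0 := by
            rcases eq_or_ne w b with rfl | h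
            · rw [if_pos rfl, if_neg fun hv => h2 ⟨hv, rfl⟩]
            · rw [if_neg h]
          rw [r1, r2, add_zero]
    rw [Finset.sum_congr rfl fun w _ => key w, Finset.sum_add_distrib,
      Finset.sum_ite_eq' univ a, Finset.sum_ite_eq' univ b]
    simp only [Finset.mem_univ, if_true, Pi.sub_apply, Pi.single_apply]
    split_ifs <;> ring

lemma mem_divSet (hG : G.Connected) (u : V → ℝ) (hu : ∑ v, u v = 0) :
    u ∈ divSet G := by
  obtain ⟨a₀⟩ := hG.nonempty
  have hpair : ∀ a b : V, (Pi.single b 1 - Pi.single a 1 : V → ℝ) ∈ divSet G := by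
    intro a b
    obtain ⟨p⟩ := hG.preconnected a b
    induction p with
    | nil => simp
    | @cons c d e h' p ih =>
        have : (Pi.single e 1 - Pi.single c 1 : V → ℝ)
            = (Pi.single e 1 - Pi.single d 1) + (Pi.single d 1 - Pi.single c 1) := by ring
        rw [this]
        exact Submodule.add_mem _ ih (edge_mem G h')
  have hrepr : u = ∑ b : V, u b • ((Pi.single b 1 - Pi.single a₀ 1 : V → ℝ)) := by
    funext v
    rw [Finset.sum_apply]
    have : ∀ b : V, (u b • ((Pi.single b 1 - Pi.single a₀ 1 : V → ℝ))) v
        = (if b = v then u b else 0) - u b * (if v = a₀ then 1 else 0) := by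
      intro b
      simp only [Pi.smul_apply, Pi.sub_apply, Pi.single_apply, smul_eq_mul, mul_sub]
      congr 1
      rcases eq_or_ne v b with rfl | h
      · simp
      · rw [if_neg h, mul_zero, if_neg (Ne.symm h)]
    rw [Finset.sum_congr rfl fun b _ => this b, Finset.sum_sub_distrib,
      Finset.sum_ite_eq' univ v, ← Finset.sum_mul, hu]
    simp
  rw [hrepr]
  exact Submodule.sum_mem _ fun b _ => Submodule.smul_mem _ _ (hpair a₀ b)




variable {V : Type*} [Fintype V] (G : SimpleGraph V) [DecidableRel G.Adj]

lemma sum_mul_eq_half (ξ : V → V → ℝ) (hξ : ∀ v w, ξ v w = -ξ w v) (x u : V → ℝ)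
    (hdiv : ∀ v, (∑ w, if G.Adj v w then ξ v w else 0) = u v) :
    ∑ v, x v * u v
      = (1/2) * ∑ v, ∑ w, if G.Adj v w then ξ v w * (x v - x w) else 0 := by
  have hL : ∑ v, x v * u v
      = ∑ v, ∑ w, if G.Adj v w then x v * ξ v w else 0 := by
    refine Finset.sum_congr rfl fun v _ => ?_
    rw [← hdiv v, Finset.mul_sum]
    exact Finset.sum_congr rfl fun w _ => by split <;> simp
  have hC : (∑ v, ∑ w, if G.Adj v w then x w * ξ v w else 0)
      = -∑ v, ∑ w, if G.Adj v w then x v * ξ v w else 0 := by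
    rw [Finset.sum_comm, ← Finset.sum_neg_distrib]
    refine Finset.sum_congr rfl fun v _ => ?_
    rw [← Finset.sum_neg_distrib]
    refine Finset.sum_congr rfl fun w _ => ?_
    by_cases h : G.Adj v w
    · rw [if_pos h.symm, if_pos h, hξ w v]; ring
    · rw [if_neg (fun hh => h hh.symm), if_neg h, neg_zero]
  have hsplit : ∀ v w : V, (if G.Adj v w then ξ v w * (x v - x w) else 0)
      = (if G.Adj v w then x v * ξ v w else 0) - (if G.Adj v w then x w * ξ v w else 0) := by
    intro v w; split <;> ring
  simp only [hsplit]
  rw [Finset.sum_congr rfl fun v _ => Finset.sum_sub_distrib _ _, Finset.sum_sub_distrib, hC, hL]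
  ring

lemma finite_edge_set (ξ : V → V → ℝ) :
    ({a | ∃ v w, G.Adj v w ∧ a = |ξ v w|} : Set ℝ).Finite := by
  have : {a | ∃ v w, G.Adj v w ∧ a = |ξ v w|}
      = (fun p : V × V => |ξ p.1 p.2|) '' {p | G.Adj p.1 p.2} := by
    ext a
    constructor
    · rintro ⟨v, w, h, rfl⟩; exact ⟨(v, w), h, rfl⟩
    · rintro ⟨⟨v, w⟩, h, rfl⟩; exact ⟨v, w, h, rfl⟩
  rw [this]
  exact (Set.toFinite _).image _

lemma sSup_edge_nonneg (ξ : V → V → ℝ) :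
    0 ≤ sSup {a | ∃ v w, G.Adj v w ∧ a = |ξ v w|} := by
  rcases Set.eq_empty_or_nonempty {a | ∃ v w, G.Adj v w ∧ a = |ξ v w|} with h | ⟨a, ha⟩
  · rw [h, Real.sSup_empty]
  · obtain ⟨v, w, hvw, rfl⟩ := ha
    exact le_trans (abs_nonneg _) (le_csSup (finite_edge_set G ξ).bddAbove ⟨v, w, hvw, rfl⟩)

lemma weak_bound (ξ : V → V → ℝ) (hξ : ∀ v w, ξ v w = -ξ w v) (x u : V → ℝ)
    (hdiv : ∀ v, (∑ w, if G.Adj v w then ξ v w else 0) = u v) :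
    ∑ v, x v * u v ≤ sSup {a | ∃ v w, G.Adj v w ∧ a = |ξ v w|} * tvNorm G x := by
  set M := sSup {a | ∃ v w, G.Adj v w ∧ a = |ξ v w|} with hM
  have hM0 : 0 ≤ M := sSup_edge_nonneg G ξ
  have hMe : ∀ v w, G.Adj v w → |ξ v w| ≤ M :=
    fun v w h => le_csSup (finite_edge_set G ξ).bddAbove ⟨v, w, h, rfl⟩
  rw [sum_mul_eq_half G ξ hξ x u hdiv]
  have hb : (∑ v, ∑ w, if G.Adj v w then ξ v w * (x v - x w) else 0)
      ≤ ∑ v, ∑ w, M * (if G.Adj v w then |x w - x v| else 0) := by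
    refine Finset.sum_le_sum fun v _ => Finset.sum_le_sum fun w _ => ?_
    split
    next h =>
      calc ξ v w * (x v - x w) ≤ |ξ v w * (x v - x w)| := le_abs_self _
        _ = |ξ v w| * |x w - x v| := by rw [abs_mul, abs_sub_comm]
        _ ≤ M * |x w - x v| := by
            exact mul_le_mul_of_nonneg_right (hMe v w h) (abs_nonneg _)
    next h => simp [h]
  calc (1/2) * ∑ v, ∑ w, (if G.Adj v w then ξ v w * (x v - x w) else 0)
      ≤ (1/2) * ∑ v, ∑ w, M * (if G.Adj v w then |x w - x v| else 0) := by linarith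
    _ = M * tvNorm G x := by
        simp only [← Finset.mul_sum]
        unfold tvNorm
        ring



section HB
variable {V : Type*} [Fintype V] [DecidableEq V] (G : SimpleGraph V) [DecidableRel G.Adj]

def gradL : (V → ℝ) →ₗ[ℝ] (V × V → ℝ) where
  toFun x p := if G.Adj p.1 p.2 then x p.2 - x p.1 else 0
  map_add' x y := by
    funext p; by_cases h : G.Adj p.1 p.2 <;> simp [h] <;> ring
  map_smul' r x := by
    funext p; by_cases h : G.Adj p.1 p.2 <;> simp [h] <;> ring

def fL (u : V → ℝ) : (V → ℝ) →ₗ[ℝ] ℝ where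
  toFun x := ∑ v, x v * u v
  map_add' x y := by simp [add_mul, Finset.sum_add_distrib]
  map_smul' r x := by simp [Finset.mul_sum, mul_assoc]

lemma zero_mem_SD (u : V → ℝ) :
    (0:ℝ) ∈ {r | ∃ x : V → ℝ, (∑ v, x v = 0) ∧ tvNorm G x ≤ 1 ∧ r = ∑ v, x v * u v} :=
  ⟨0, by simp, by norm_num [tvNorm], by simp⟩

lemma bddAbove_SD (hG : G.Connected) (u : V → ℝ) (hu : ∑ v, u v = 0) :
    BddAbove {r | ∃ x : V → ℝ, (∑ v, x v = 0) ∧ tvNorm G x ≤ 1 ∧ r = ∑ v, x v * u v} := by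
  obtain ⟨ξ₁, h1, h2⟩ := mem_divSet G hG u hu
  refine ⟨sSup {a | ∃ v w, G.Adj v w ∧ a = |ξ₁ v w|}, ?_⟩
  rintro r ⟨x, hx0, hx1, rfl⟩
  calc ∑ v, x v * u v ≤ sSup {a | ∃ v w, G.Adj v w ∧ a = |ξ₁ v w|} * tvNorm G x :=
        weak_bound G ξ₁ h1 x u h2
    _ ≤ sSup {a | ∃ v w, G.Adj v w ∧ a = |ξ₁ v w|} * 1 :=
        mul_le_mul_of_nonneg_left hx1 (sSup_edge_nonneg G ξ₁)
    _ = _ := mul_one _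

lemma dualNorm_nonneg (hG : G.Connected) (u : V → ℝ) (hu : ∑ v, u v = 0) :
    0 ≤ dualNorm G u :=
  le_csSup (bddAbove_SD G hG u hu) (zero_mem_SD G u)

lemma key_bound (hG : G.Connected) (u : V → ℝ) (hu : ∑ v, u v = 0) (x : V → ℝ) :
    ∑ v, x v * u v ≤ dualNorm G u * tvNorm G x := by
  obtain ⟨v₀⟩ := hG.nonempty
  have hcard : (0:ℝ) < (Fintype.card V : ℝ) := by
    exact_mod_cast Fintype.card_pos_iff.mpr ⟨v₀⟩
  set m : ℝ := (∑ v, x v) / Fintype.card V with hm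
  set x₀ : V → ℝ := fun v => x v - m with hx₀
  have hsum0 : ∑ v, x₀ v = 0 := by
    simp only [hx₀, Finset.sum_sub_distrib, Finset.sum_const, Finset.card_univ, nsmul_eq_mul]
    rw [hm]; field_simp; ring
  have htv : tvNorm G x₀ = tvNorm G x := by
    unfold tvNorm
    congr 1
    refine Finset.sum_congr rfl fun v _ => Finset.sum_congr rfl fun w _ => ?_
    have e : x₀ w - x₀ v = x w - x v := by simp only [hx₀]; ring
    rw [e]
  have hfx : ∑ v, x v * u v = ∑ v, x₀ v * u v := by
    simp only [hx₀, sub_mul, Finset.sum_sub_distrib, ← Finset.mul_sum, hu, mul_zero, sub_zero]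
  rw [hfx, ← htv]
  set c := dualNorm G u with hc
  have hc0 : 0 ≤ c := dualNorm_nonneg G hG u hu
  rcases eq_or_lt_of_le (tvNorm_nonneg G x₀) with h0 | hpos
  · have hconst : ∀ v w, G.Adj v w → x₀ w = x₀ v := by
      have hS : (∑ v, ∑ w, if G.Adj v w then |x₀ w - x₀ v| else 0) = 0 := by
        have h0' : tvNorm G x₀ = 0 := h0.symm
        unfold tvNorm at h0'; linarith
      have hinner : ∀ v ∈ (univ : Finset V),
          (∑ w, if G.Adj v w then |x₀ w - x₀ v| else 0) = 0 :=
        (Finset.sum_eq_zero_iff_of_nonneg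
          (fun v _ => Finset.sum_nonneg fun w _ => by positivity)).mp hS
      intro v w h
      have hterm := (Finset.sum_eq_zero_iff_of_nonneg
          (fun w _ => by positivity)).mp (hinner v (Finset.mem_univ v)) w (Finset.mem_univ w)
      rw [if_pos h] at hterm
      have := abs_eq_zero.mp hterm
      linarith [sub_eq_zero.mp this]
    have hxc : ∀ v, x₀ v = x₀ v₀ := fun v =>
      const_of_grad G hG.preconnected x₀ hconst v v₀
    have : ∑ v, x₀ v * u v = x₀ v₀ * ∑ v, u v := by
      rw [Finset.mul_sum]
      exact Finset.sum_congr rfl fun v _ => by rw [hxc v]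
    rw [this, hu, mul_zero]
    exact mul_nonneg hc0 (tvNorm_nonneg G x₀)
  · set t := tvNorm G x₀ with ht
    have hmem : t⁻¹ * ∑ v, x₀ v * u v
        ∈ {r | ∃ y : V → ℝ, (∑ v, y v = 0) ∧ tvNorm G y ≤ 1 ∧ r = ∑ v, y v * u v} := by
      refine ⟨t⁻¹ • x₀, ?_, ?_, ?_⟩
      · simp only [Pi.smul_apply, smul_eq_mul, ← Finset.mul_sum, hsum0, mul_zero]
      · rw [tvNorm_smul, ← ht, abs_of_pos (by positivity), inv_mul_cancel₀ (ne_of_gt hpos)]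
      · simp only [Pi.smul_apply, smul_eq_mul, Finset.mul_sum, mul_assoc]
    have hle : t⁻¹ * ∑ v, x₀ v * u v ≤ c :=
      le_csSup (bddAbove_SD G hG u hu) hmem
    calc ∑ v, x₀ v * u v = t * (t⁻¹ * ∑ v, x₀ v * u v) := by
          field_simp
      _ ≤ t * c := mul_le_mul_of_nonneg_left hle (le_of_lt hpos)
      _ = c * t := mul_comm _ _

lemma exists_field (hG : G.Connected) (u : V → ℝ) (hu : ∑ v, u v = 0) :
    ∃ ξ : V → V → ℝ, (∀ v w, ξ v w = -ξ w v) ∧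
      (∀ v, (∑ w, if G.Adj v w then ξ v w else 0) = u v) ∧
      (∀ v w, G.Adj v w → |ξ v w| ≤ dualNorm G u) := by
  set c := dualNorm G u with hc
  have hc0 : 0 ≤ c := dualNorm_nonneg G hG u hu
  set N : (V × V → ℝ) → ℝ :=
    fun η => (c/2) * ∑ p : V × V, if G.Adj p.1 p.2 then |η p| else 0 with hN
  have N_hom : ∀ r : ℝ, 0 < r → ∀ η, N (r • η) = r * N η := by
    intro r hr η
    simp only [hN, Pi.smul_apply, smul_eq_mul]
    have e : ∀ p : V × V, (if G.Adj p.1 p.2 then |r * η p| else 0)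
        = r * (if G.Adj p.1 p.2 then |η p| else 0) := by
      intro p; split
      · rw [abs_mul, abs_of_pos hr]
      · rw [mul_zero]
    rw [Finset.sum_congr rfl fun p _ => e p, ← Finset.mul_sum]
    ring
  have N_add : ∀ η θ, N (η + θ) ≤ N η + N θ := by
    intro η θ
    simp only [hN]
    rw [← mul_add, ← Finset.sum_add_distrib]
    refine mul_le_mul_of_nonneg_left (Finset.sum_le_sum fun p _ => ?_) (by positivity)
    split
    · exact abs_add_le _ _
    · simp
  have hker : LinearMap.ker (gradL G) ≤ LinearMap.ker (fL u) := by
    intro x hx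
    rw [LinearMap.mem_ker] at hx ⊢
    have hconst : ∀ v w, G.Adj v w → x w = x v := by
      intro v w h
      have h2 := congrFun hx (v, w)
      simp only [gradL, LinearMap.coe_mk, AddHom.coe_mk, Pi.zero_apply] at h2
      rw [if_pos h] at h2
      linarith [sub_eq_zero.mp h2]
    obtain ⟨v₀⟩ := hG.nonempty
    have hxc : ∀ v, x v = x v₀ := fun v =>
      const_of_grad G hG.preconnected x hconst v v₀
    show (∑ v, x v * u v) = 0
    have : ∑ v, x v * u v = x v₀ * ∑ v, u v := by
      rw [Finset.mul_sum]
      exact Finset.sum_congr rfl fun v _ => by rw [hxc v]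
    rw [this, hu, mul_zero]
  set φ : ↥(LinearMap.range (gradL G)) →ₗ[ℝ] ℝ :=
    (Submodule.liftQ (LinearMap.ker (gradL G)) (fL u) hker).comp
      (LinearMap.quotKerEquivRange (gradL G)).symm.toLinearMap with hφdef
  have hφ : ∀ (x : V → ℝ) (h : gradL G x ∈ LinearMap.range (gradL G)),
      φ ⟨gradL G x, h⟩ = ∑ v, x v * u v := by
    intro x h
    show (Submodule.liftQ (LinearMap.ker (gradL G)) (fL u) hker)
      ((LinearMap.quotKerEquivRange (gradL G)).symm ⟨gradL G x, h⟩) = _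
    rw [LinearMap.quotKerEquivRange_symm_apply_image, Submodule.mkQ_apply,
      Submodule.liftQ_apply]
    rfl
  have hNg : ∀ x : V → ℝ, N (gradL G x) = c * tvNorm G x := by
    intro x
    simp only [hN]
    unfold tvNorm
    rw [Fintype.sum_prod_type]
    have e : ∀ v w : V, (if G.Adj (v, w).1 (v, w).2 then |(gradL G x) (v, w)| else 0)
        = (if G.Adj v w then |x w - x v| else 0) := by
      intro v w; by_cases h : G.Adj v w <;> simp [gradL, h]
    rw [Finset.sum_congr rfl fun v _ => Finset.sum_congr rfl fun w _ => e v w]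
    ring
  have hf : ∀ y : (LinearPMap.mk (LinearMap.range (gradL G)) φ : (V × V → ℝ) →ₗ.[ℝ] ℝ).domain,
      (LinearPMap.mk (LinearMap.range (gradL G)) φ) y ≤ N y := by
    rintro ⟨y, hy⟩
    obtain ⟨x, rfl⟩ := hy
    show φ ⟨gradL G x, LinearMap.mem_range_self _ x⟩ ≤ N (gradL G x)
    rw [hφ x, hNg x]
    exact key_bound G hG u hu x
  obtain ⟨g, hg_eq, hg_le⟩ :=
    exists_extension_of_le_sublinear (LinearPMap.mk (LinearMap.range (gradL G)) φ) N N_hom N_add hf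
  set ξ' : V × V → ℝ := fun p => g (fun q => if p = q then 1 else 0) with hξ'
  have hrep : ∀ η : V × V → ℝ, g η = ∑ p : V × V, η p * ξ' p := by
    intro η
    rw [LinearMap.pi_apply_eq_sum_univ g η]
    exact Finset.sum_congr rfl fun p _ => by rw [smul_eq_mul, hξ']
  have hNδ : ∀ v w : V, G.Adj v w →
      N (fun q => if (v, w) = q then (1:ℝ) else 0) = c / 2 := by
    intro v w h
    simp only [hN]
    have e : ∀ q : V × V, (if G.Adj q.1 q.2 then |if (v, w) = q then (1:ℝ) else 0| else 0)
        = if q = (v, w) then 1 else 0 := by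
      intro q
      rcases eq_or_ne q (v, w) with rfl | hq
      · simp [h]
      · rw [if_neg hq]
        split
        · rw [if_neg (Ne.symm hq), abs_zero]
        · rfl
    rw [Finset.sum_congr rfl fun q _ => e q, Finset.sum_ite_eq' univ (v, w) (fun _ => (1:ℝ))]
    simp
  have hbd : ∀ v w, G.Adj v w → |ξ' (v, w)| ≤ c / 2 := by
    intro v w h
    have h1 : ξ' (v, w) ≤ c / 2 := by
      have := hg_le (fun q => if (v, w) = q then (1:ℝ) else 0)
      rwa [hNδ v w h] at this
    have h2 : -ξ' (v, w) ≤ c / 2 := by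
      have := hg_le (-(fun q => if (v, w) = q then (1:ℝ) else 0))
      rw [map_neg] at this
      have hNneg : N (-(fun q => if (v, w) = q then (1:ℝ) else 0))
          = N (fun q => if (v, w) = q then (1:ℝ) else 0) := by
        simp only [hN]
        congr 1
        refine Finset.sum_congr rfl fun q _ => ?_
        rw [Pi.neg_apply, abs_neg]
      rw [hNneg, hNδ v w h] at this
      exact this
    exact abs_le.mpr ⟨by linarith, h1⟩
  set ζ : V → V → ℝ := fun v w => if G.Adj v w then ξ' (w, v) - ξ' (v, w) else 0 with hζ
  have hζa : ∀ v w, ζ v w = -ζ w v := by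
    intro v w
    simp only [hζ]
    by_cases h : G.Adj v w
    · rw [if_pos h, if_pos h.symm]; ring
    · rw [if_neg h, if_neg (fun hh => h hh.symm), neg_zero]
  have hkey : ∀ x : V → ℝ, ∑ v, x v * u v
      = ∑ v, ∑ w, if G.Adj v w then (x w - x v) * ξ' (v, w) else 0 := by
    intro x
    have h1 : g (gradL G x) = ∑ v, x v * u v := by
      have := hg_eq ⟨gradL G x, LinearMap.mem_range_self _ x⟩
      rw [this]
      exact hφ x _
    rw [← h1, hrep]
    rw [Fintype.sum_prod_type]
    refine Finset.sum_congr rfl fun v _ => Finset.sum_congr rfl fun w _ => ?_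
    by_cases h : G.Adj v w
    · simp only [gradL, LinearMap.coe_mk, AddHom.coe_mk]
      rw [if_pos h, if_pos h]
    · simp only [gradL, LinearMap.coe_mk, AddHom.coe_mk]
      rw [if_neg h, if_neg h, zero_mul]
  have hdiv : ∀ a, (∑ w, if G.Adj a w then ζ a w else 0) = u a := by
    intro a
    have hx := hkey (fun v => if v = a then (1:ℝ) else 0)
    have e1 : ∀ v : V, (if v = a then (1:ℝ) else 0) * u v = if v = a then u v else 0 := by
      intro v; split <;> simp
    rw [Finset.sum_congr rfl fun v _ => e1 v, Finset.sum_ite_eq' univ a u,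
      if_pos (Finset.mem_univ a)] at hx
    have e2 : ∀ v w : V, (if G.Adj v w then
        ((if w = a then (1:ℝ) else 0) - (if v = a then 1 else 0)) * ξ' (v, w) else 0)
        = (if w = a then (if G.Adj v w then ξ' (v, w) else 0) else 0)
          - (if v = a then (if G.Adj v w then ξ' (v, w) else 0) else 0) := by
      intro v w
      split_ifs <;> ring
    rw [Finset.sum_congr rfl (fun v _ => Finset.sum_congr rfl fun w _ => e2 v w)] at hx
    rw [Finset.sum_congr rfl (fun v _ => Finset.sum_sub_distrib _ _), Finset.sum_sub_distrib] at hx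
    have e3 : (∑ v, ∑ w, if w = a then (if G.Adj v w then ξ' (v, w) else 0) else 0)
        = ∑ v, if G.Adj v a then ξ' (v, a) else 0 := by
      refine Finset.sum_congr rfl fun v _ => ?_
      rw [Finset.sum_ite_eq' univ a (fun w => if G.Adj v w then ξ' (v, w) else 0)]
      simp
    have e4 : (∑ v, ∑ w, if v = a then (if G.Adj v w then ξ' (v, w) else 0) else 0)
        = ∑ w, if G.Adj a w then ξ' (a, w) else 0 := by
      rw [Finset.sum_comm]
      refine Finset.sum_congr rfl fun w _ => ?_
      rw [Finset.sum_ite_eq' univ a (fun v => if G.Adj v w then ξ' (v, w) else 0)]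
      simp
    rw [e3, e4] at hx
    have e5 : (∑ w, if G.Adj a w then ζ a w else 0)
        = (∑ v, if G.Adj v a then ξ' (v, a) else 0)
          - ∑ w, if G.Adj a w then ξ' (a, w) else 0 := by
      rw [← Finset.sum_sub_distrib]
      refine Finset.sum_congr rfl fun w _ => ?_
      by_cases h : G.Adj a w
      · rw [if_pos h, if_pos h.symm, if_pos h]
        simp only [hζ]
        rw [if_pos h]
      · rw [if_neg h, if_neg (fun hh => h hh.symm), if_neg h, sub_zero]
    rw [e5]
    exact hx.symm
  refine ⟨ζ, hζa, hdiv, fun v w h => ?_⟩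
  simp only [hζ]
  rw [if_pos h]
  calc |ξ' (w, v) - ξ' (v, w)| ≤ |ξ' (w, v)| + |ξ' (v, w)| := abs_sub _ _
    _ ≤ c / 2 + c / 2 := add_le_add (hbd w v h.symm) (hbd v w h)
    _ = c := by ring

end HB
end TVProof


/-- The dual TV norm of a zero-mean `u` equals the infimum of `‖ξ‖_∞` over all
antisymmetric vector fields `ξ` on the (oriented) edges with `div ξ = u`, where
`(div ξ)(v) = ∑_{w ∼ v} ξ v w` and `‖ξ‖_∞` is the sup of `|ξ|` over edges. -/
theorem dualNorm_eq_inf_div {V : Type*} [Fintype V]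
    (G : SimpleGraph V) [DecidableRel G.Adj] (hG : G.Connected)
    (u : V → ℝ) (hu : ∑ v, u v = 0) :
    dualNorm G u =
      sInf {r | ∃ ξ : V → V → ℝ,
        (∀ v w, ξ v w = -ξ w v) ∧
        (∀ v, (∑ w, if G.Adj v w then ξ v w else 0) = u v) ∧
        r = sSup {a | ∃ v w, G.Adj v w ∧ a = |ξ v w|}} := by
  classical
  set T := {r | ∃ ξ : V → V → ℝ,
        (∀ v w, ξ v w = -ξ w v) ∧
        (∀ v, (∑ w, if G.Adj v w then ξ v w else 0) = u v) ∧
        r = sSup {a | ∃ v w, G.Adj v w ∧ a = |ξ v w|}} with hT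
  obtain ⟨ξ₁, hξ₁a, hξ₁d⟩ := TVProof.mem_divSet G hG u hu
  have hTne : T.Nonempty := ⟨_, ξ₁, hξ₁a, hξ₁d, rfl⟩
  have hTlb : ∀ r ∈ T, (0:ℝ) ≤ r := by
    rintro r ⟨ξ, h1, h2, rfl⟩
    exact TVProof.sSup_edge_nonneg G ξ
  have hSub : ∀ r ∈ {r | ∃ x : V → ℝ,
      (∑ v, x v = 0) ∧ tvNorm G x ≤ 1 ∧ r = ∑ v, x v * u v}, ∀ m ∈ T, r ≤ m := by
    rintro r ⟨x, hx0, hx1, rfl⟩ m ⟨ξ, h1, h2, rfl⟩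
    calc ∑ v, x v * u v ≤ sSup {a | ∃ v w, G.Adj v w ∧ a = |ξ v w|} * tvNorm G x :=
          TVProof.weak_bound G ξ h1 x u h2
      _ ≤ sSup {a | ∃ v w, G.Adj v w ∧ a = |ξ v w|} * 1 :=
          mul_le_mul_of_nonneg_left hx1 (TVProof.sSup_edge_nonneg G ξ)
      _ = _ := mul_one _
  have h1 : dualNorm G u ≤ sInf T := by
    refine le_csInf hTne fun m hm => ?_
    exact csSup_le ⟨0, TVProof.zero_mem_SD G u⟩ fun r hr => hSub r hr m hm
  have h2 : sInf T ≤ dualNorm G u := by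
    obtain ⟨ζ, hζ1, hζ2, hζ3⟩ := TVProof.exists_field G hG u hu
    have hmem : sSup {a | ∃ v w, G.Adj v w ∧ a = |ζ v w|} ∈ T := ⟨ζ, hζ1, hζ2, rfl⟩
    refine le_trans (csInf_le ⟨0, hTlb⟩ hmem) ?_
    exact Real.sSup_le (by rintro a ⟨v, w, hvw, rfl⟩; exact hζ3 v w hvw)
      (TVProof.dualNorm_nonneg G hG u hu)
  linarith
end
end

section
/- Let G=(V,E) be a finite connected graph and u ∈ ℝ₀^V. Then ‖u‖_* = max of |⟨u, 1_S⟩| / per(S) over nonempty subsets S ⊆ V with |S| ≤ |V|/2 such that the induced subgraph G(S) is connected. -/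
open Finset

noncomputable section

/-- Perimeter of a subset of vertices. -/
def perim {V : Type*} [Fintype V] [DecidableEq V] (G : SimpleGraph V)
    [DecidableRel G.Adj] (A : Finset V) : ℝ :=
  tvNorm G (fun v => if v ∈ A then 1 else 0)

section Aux

variable {V : Type*} [Fintype V] [DecidableEq V] (G : SimpleGraph V) [DecidableRel G.Adj]

lemma tv_nonneg (x : V → ℝ) : 0 ≤ tvNorm G x := by
  unfold tvNorm
  apply mul_nonneg (by norm_num)
  refine Finset.sum_nonneg fun v _ => Finset.sum_nonneg fun w _ => ?_
  split <;> positivity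

lemma perim_nonneg (A : Finset V) : 0 ≤ perim G A := tv_nonneg G _

lemma tv_congr (x y : V → ℝ) (h : ∀ v w, G.Adj v w → |x w - x v| = |y w - y v|) :
    tvNorm G x = tvNorm G y := by
  unfold tvNorm
  congr 1
  refine Finset.sum_congr rfl fun v _ => Finset.sum_congr rfl fun w _ => ?_
  split
  · exact h v w (by assumption)
  · rfl

lemma tv_split (x y z : V → ℝ)
    (h : ∀ v w, G.Adj v w → |x w - x v| = |y w - y v| + |z w - z v|) :
    tvNorm G x = tvNorm G y + tvNorm G z := by
  unfold tvNorm
  rw [← mul_add, ← Finset.sum_add_distrib]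
  congr 1
  refine Finset.sum_congr rfl fun v _ => ?_
  rw [← Finset.sum_add_distrib]
  refine Finset.sum_congr rfl fun w _ => ?_
  split
  · exact h v w (by assumption)
  · norm_num

lemma tv_affine (a b : ℝ) (x : V → ℝ) :
    tvNorm G (fun v => a * x v + b) = |a| * tvNorm G x := by
  unfold tvNorm
  have h : ∀ v w, (if G.Adj v w then |(a * x w + b) - (a * x v + b)| else 0)
      = |a| * (if G.Adj v w then |x w - x v| else 0) := by
    intro v w
    split
    · rw [← abs_mul]; ring_nf
    · simp
  simp_rw [h, ← Finset.mul_sum]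
  ring

lemma perim_compl (A : Finset V) : perim G Aᶜ = perim G A := by
  refine tv_congr G _ _ fun v w _ => ?_
  by_cases hv : v ∈ A <;> by_cases hw : w ∈ A <;>
    simp [hv, hw, Finset.mem_compl] <;> norm_num

lemma perim_union (A B : Finset V) (hd : Disjoint A B)
    (hE : ∀ a ∈ A, ∀ b ∈ B, ¬G.Adj a b) :
    perim G (A ∪ B) = perim G A + perim G B := by
  refine tv_split G _ _ _ fun v w hvw => ?_
  by_cases hvA : v ∈ A <;> by_cases hvB : v ∈ B <;> by_cases hwA : w ∈ A <;>
      by_cases hwB : w ∈ B <;>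
    first
      | (exact absurd hvw (hE v hvA w hwB))
      | (exact absurd hvw.symm (hE w hwA v hvB))
      | (exact absurd rfl (hd.forall_ne_finset hvA hvB))
      | (exact absurd rfl (hd.forall_ne_finset hwA hwB))
      | (simp only [hvA, hvB, hwA, hwB, Finset.mem_union, if_true, if_false,
          or_true, true_or, or_self, if_neg, if_pos]; norm_num)

/-- In a preconnected graph there is an edge crossing any nontrivial cut. -/
lemma exists_crossing_walk (S : Finset V) :
    ∀ {a b : V}, G.Walk a b → a ∈ S → b ∉ S → ∃ v ∈ S, ∃ w, w ∉ S ∧ G.Adj v w := by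
  intro a b p
  induction p with
  | nil => intro h1 h2; exact absurd h1 h2
  | @cons a c b h p ih =>
    intro ha hb
    by_cases hc : c ∈ S
    · exact ih hc hb
    · exact ⟨a, ha, c, hc, h⟩

lemma perim_pos (hG : G.Connected) (S : Finset V) (h1 : S.Nonempty) (h2 : Sᶜ.Nonempty) :
    0 < perim G S := by
  obtain ⟨a, ha⟩ := h1
  obtain ⟨b, hb⟩ := h2
  rw [Finset.mem_compl] at hb
  obtain ⟨v, hv, w, hw, hadj⟩ := exists_crossing_walk G S (hG.preconnected a b).some ha hb
  have key : (1:ℝ) ≤ ∑ v, ∑ w, if G.Adj v w then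
      |(if w ∈ S then (1:ℝ) else 0) - (if v ∈ S then 1 else 0)| else 0 := by
    have h1 : (1:ℝ) ≤ ∑ w', if G.Adj v w' then
        |(if w' ∈ S then (1:ℝ) else 0) - (if v ∈ S then 1 else 0)| else 0 := by
      have := Finset.single_le_sum (f := fun w' => if G.Adj v w' then
        |(if w' ∈ S then (1:ℝ) else 0) - (if v ∈ S then 1 else 0)| else 0)
        (fun i _ => by split <;> positivity) (Finset.mem_univ w)
      refine le_trans ?_ this
      simp [hadj, hv, hw]
    refine le_trans h1 ?_
    exact Finset.single_le_sum (f := fun v' => ∑ w', if G.Adj v' w' then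
        |(if w' ∈ S then (1:ℝ) else 0) - (if v' ∈ S then 1 else 0)| else 0)
      (fun i _ => Finset.sum_nonneg fun j _ => by split <;> positivity)
      (Finset.mem_univ v)
  unfold perim tvNorm
  nlinarith

/-- Relation "adjacent within S" as a graph on V. -/
def subAdj (S : Finset V) : SimpleGraph V where
  Adj a b := G.Adj a b ∧ a ∈ S ∧ b ∈ S
  symm := ⟨fun a b ⟨h1, h2, h3⟩ => ⟨h1.symm, h3, h2⟩⟩
  loopless := ⟨fun a ⟨h1, _⟩ => G.irrefl h1⟩

lemma induce_connected_of_reachable (S : Finset V) (v : V) (hv : v ∈ S)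
    (h : ∀ w ∈ S, (subAdj G S).Reachable v w) :
    (G.induce (S : Set V)).Connected := by
  have walkstep : ∀ {a b : V} (_ : (subAdj G S).Walk a b) (ha : a ∈ S) (hb : b ∈ S),
      (G.induce (S : Set V)).Reachable ⟨a, by simpa using ha⟩ ⟨b, by simpa using hb⟩ := by
    intro a b p
    induction p with
    | nil => intro ha hb; exact SimpleGraph.Reachable.refl _
    | @cons a c b h p ih =>
      intro ha hb
      have hc : c ∈ S := h.2.2
      have hadj : (G.induce (S : Set V)).Adj ⟨a, by simpa using ha⟩ ⟨c, by simpa using hc⟩ := h.1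
      exact hadj.reachable.trans (ih hc hb)
  rw [SimpleGraph.connected_iff]
  constructor
  · rintro ⟨a, ha⟩ ⟨b, hb⟩
    rw [Finset.mem_coe] at ha hb
    have ha' : a ∈ S := by simpa using ha
    have hb' : b ∈ S := by simpa using hb
    have r1 := (h a ha').symm
    have r2 := h b hb'
    obtain ⟨p1⟩ := r1
    obtain ⟨p2⟩ := r2
    exact (walkstep p1 ha' hv).trans (walkstep p2 hv hb')
  · exact ⟨⟨v, by simpa using hv⟩⟩

end Aux

section Main

variable {V : Type*} [Fintype V] [DecidableEq V] [Nontrivial V]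
  (G : SimpleGraph V) [DecidableRel G.Adj]

/-- Key cut bound: for any nonempty proper subset, `|∑_S u| ≤ M · perim S`. -/
lemma key_bound (hG : G.Connected) (u : V → ℝ) (M : ℝ)
    (hM : ∀ S : Finset V, S.Nonempty → 2 * S.card ≤ Fintype.card V →
      (G.induce (S : Set V)).Connected → |∑ v ∈ S, u v| / perim G S ≤ M)
    (hu : ∑ v, u v = 0) :
    ∀ S : Finset V, S.Nonempty → Sᶜ.Nonempty → |∑ v ∈ S, u v| ≤ M * perim G S := by
  suffices h : ∀ n (S : Finset V), S.card ≤ n → S.Nonempty → Sᶜ.Nonempty →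
      |∑ v ∈ S, u v| ≤ M * perim G S by
    intro S h1 h2; exact h S.card S le_rfl h1 h2
  intro n
  induction n with
  | zero =>
    intro S hc h1 h2
    exact absurd (Finset.card_eq_zero.mp (Nat.le_zero.mp hc)) h1.ne_empty
  | succ n ih =>
    intro S hc h1 h2
    by_cases hhalf : 2 * S.card ≤ Fintype.card V
    · by_cases hconn : (G.induce (S : Set V)).Connected
      · have hp := perim_pos G hG S h1 h2
        have hr := hM S h1 hhalf hconn
        calc |∑ v ∈ S, u v| = (|∑ v ∈ S, u v| / perim G S) * perim G S := by
              field_simp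
          _ ≤ M * perim G S := mul_le_mul_of_nonneg_right hr hp.le
      · obtain ⟨v, hv⟩ := h1
        classical
        set C := S.filter (fun w => (subAdj G S).Reachable v w) with hCdef
        have hCS : C ⊆ S := Finset.filter_subset _ _
        have hvC : v ∈ C := Finset.mem_filter.mpr ⟨hv, SimpleGraph.Reachable.refl v⟩
        have hDne : (S \ C).Nonempty := by
          rw [Finset.sdiff_nonempty]
          intro hSC
          apply hconn
          apply induce_connected_of_reachable G S v hv
          intro w hw
          exact (Finset.mem_filter.mp (hSC hw)).2
        obtain ⟨b0, hb0⟩ := hDne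
        have hnoedge : ∀ a ∈ C, ∀ b ∈ S \ C, ¬ G.Adj a b := by
          intro a haC b hb hadj
          obtain ⟨hbS, hbC⟩ := Finset.mem_sdiff.mp hb
          obtain ⟨haS, hra⟩ := Finset.mem_filter.mp haC
          exact hbC (Finset.mem_filter.mpr ⟨hbS,
            hra.trans (SimpleGraph.Adj.reachable ⟨hadj, haS, hbS⟩)⟩)
        have hunion : C ∪ (S \ C) = S := Finset.union_sdiff_of_subset hCS
        have hdisj : Disjoint C (S \ C) := Finset.disjoint_sdiff
        have hcC : C.card < S.card := Finset.card_lt_card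
          (Finset.ssubset_iff_of_subset hCS |>.mpr
            ⟨b0, (Finset.mem_sdiff.mp hb0).1, (Finset.mem_sdiff.mp hb0).2⟩)
        have hcD : (S \ C).card < S.card := Finset.card_lt_card
          (Finset.ssubset_iff_of_subset (Finset.sdiff_subset) |>.mpr
            ⟨v, hv, by simp [hvC]⟩)
        have hCcne : Cᶜ.Nonempty := ⟨b0, Finset.mem_compl.mpr (Finset.mem_sdiff.mp hb0).2⟩
        have hDcne : (S \ C)ᶜ.Nonempty := ⟨v, Finset.mem_compl.mpr (by simp [hvC])⟩
        have ihC := ih C (by omega) ⟨v, hvC⟩ hCcne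
        have ihD := ih (S \ C) (by omega) ⟨b0, hb0⟩ hDcne
        have hperim : perim G S = perim G C + perim G (S \ C) := by
          conv_lhs => rw [← hunion]
          exact perim_union G C (S \ C) hdisj hnoedge
        have hsum : ∑ v ∈ S, u v = (∑ v ∈ C, u v) + ∑ v ∈ S \ C, u v := by
          conv_lhs => rw [← hunion]
          rw [Finset.sum_union hdisj]
        rw [hsum, hperim, mul_add]
        exact (abs_add_le _ _).trans (add_le_add ihC ihD)
    · have hcS : S.card ≤ Fintype.card V := S.card_le_univ
      have hcc : Sᶜ.card < S.card := by
        rw [Finset.card_compl]; omega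
      have h2' : Sᶜᶜ.Nonempty := by rwa [compl_compl]
      have hrec := ih Sᶜ (by omega) h2 h2'
      rw [perim_compl] at hrec
      have hsum : ∑ v ∈ Sᶜ, u v = - ∑ v ∈ S, u v := by
        have hsc := Finset.sum_add_sum_compl S u
        rw [hu] at hsc
        linarith
      rwa [hsum, abs_neg] at hrec

/-- Coarea-type bound. -/
lemma coarea_bound (hG : G.Connected) (u : V → ℝ) (M : ℝ) (hM0 : 0 ≤ M)
    (key : ∀ S : Finset V, S.Nonempty → Sᶜ.Nonempty → |∑ v ∈ S, u v| ≤ M * perim G S)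
    (hu : ∑ v, u v = 0) :
    ∀ x : V → ℝ, ∑ v, x v * u v ≤ M * tvNorm G x := by
  suffices h : ∀ n (x : V → ℝ), (Finset.univ.image x).card ≤ n →
      ∑ v, x v * u v ≤ M * tvNorm G x by
    intro x; exact h _ x le_rfl
  intro n
  induction n with
  | zero =>
    intro x hcard
    have : (Finset.univ.image x).Nonempty := Finset.univ_nonempty.image x
    rw [← Finset.card_pos] at this
    omega
  | succ n ih =>
    intro x hcard
    classical
    have hne : (Finset.univ.image x).Nonempty := Finset.univ_nonempty.image x
    set t := (Finset.univ.image x).min' hne with htdef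
    set S := Finset.univ.filter (fun v => x v ≠ t) with hSdef
    by_cases hSne : S.Nonempty
    swap
    · have hx : ∀ v, x v = t := by
        intro v
        by_contra h
        exact hSne ⟨v, by simp [hSdef, h]⟩
      have h1 : ∑ v, x v * u v = 0 := by
        calc ∑ v, x v * u v = ∑ v, t * u v := Finset.sum_congr rfl fun v _ => by rw [hx v]
          _ = t * ∑ v, u v := by rw [Finset.mul_sum]
          _ = 0 := by rw [hu]; ring
      rw [h1]
      exact mul_nonneg hM0 (tv_nonneg G x)
    · have ht_mem : t ∈ Finset.univ.image x := Finset.min'_mem _ _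
      obtain ⟨v0, _, hv0⟩ := Finset.mem_image.mp ht_mem
      have hScne : Sᶜ.Nonempty := ⟨v0, by simp [hSdef, hv0]⟩
      have hmin : ∀ v, t ≤ x v := fun v =>
        Finset.min'_le _ _ (Finset.mem_image_of_mem x (Finset.mem_univ v))
      have hSim : (S.image x).Nonempty := hSne.image x
      set t2 := (S.image x).min' hSim with ht2def
      have ht2mem : t2 ∈ S.image x := Finset.min'_mem _ _
      obtain ⟨v2, hv2S, hv2⟩ := Finset.mem_image.mp ht2mem
      have hv2ne : x v2 ≠ t := by simpa [hSdef] using hv2S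
      have ht2gt : t < t2 := by
        rcases lt_or_eq_of_le (hmin v2) with h | h
        · rwa [hv2] at h
        · exact absurd h.symm hv2ne
      set Δ := t2 - t with hΔdef
      have hΔ : 0 < Δ := by simp [hΔdef]; linarith
      have hSval : ∀ v ∈ S, t2 ≤ x v := fun v hv =>
        Finset.min'_le _ _ (Finset.mem_image_of_mem x hv)
      have hxt : ∀ v, v ∉ S → x v = t := by
        intro v hv
        by_contra h
        exact hv (by simp [hSdef, h])
      set y := fun v => x v - Δ * (if v ∈ S then 1 else 0) with hydef
      have htv : tvNorm G x = tvNorm G y + Δ * perim G S := by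
        have haff : tvNorm G (fun v => Δ * (if v ∈ S then (1:ℝ) else 0) + 0)
            = |Δ| * perim G S := tv_affine G Δ 0 _
        simp only [add_zero] at haff
        rw [abs_of_pos hΔ] at haff
        rw [← haff]
        refine tv_split G _ _ _ fun v w hvw => ?_
        by_cases hvS : v ∈ S <;> by_cases hwS : w ∈ S
        · simp only [hydef, hvS, hwS, if_pos, mul_one, sub_sub_sub_cancel_right,
            sub_self, abs_zero, add_zero]
        · have hxw : x w = t := hxt w hwS
          have hxv : t2 ≤ x v := hSval v hvS
          simp only [hydef, hvS, hwS, if_pos, if_neg, not_false_iff]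
          rw [abs_of_nonpos (by linarith), abs_of_nonpos (by linarith),
            abs_of_nonpos (by linarith)]
          simp only [hΔdef]
          ring
        · have hxv : x v = t := hxt v hvS
          have hxw : t2 ≤ x w := hSval w hwS
          simp only [hydef, hvS, hwS, if_pos, if_neg, not_false_iff]
          rw [abs_of_nonneg (by linarith), abs_of_nonneg (by linarith),
            abs_of_nonneg (by linarith)]
          simp only [hΔdef]
          ring
        · simp [hydef, hvS, hwS, hxt v hvS, hxt w hwS]
      have hsum : ∑ v, x v * u v = (∑ v, y v * u v) + Δ * ∑ v ∈ S, u v := by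
        have hpt : ∀ v, x v * u v = y v * u v + Δ * (if v ∈ S then u v else 0) := by
          intro v
          by_cases h : v ∈ S <;> simp [hydef, h] <;> ring
        rw [Finset.sum_congr rfl fun v _ => hpt v, Finset.sum_add_distrib, ← Finset.mul_sum]
        congr 2
        rw [Finset.sum_ite_mem, Finset.univ_inter]
      have hcard' : (Finset.univ.image y).card ≤ n := by
        set g : ℝ → ℝ := fun s => if s = t then t else s - Δ with hgdef
        have hyg : y = g ∘ x := by
          funext v
          by_cases h : v ∈ S
          · have hne' : x v ≠ t := by simpa [hSdef] using h
            simp [hydef, hgdef, h, hne']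
          · simp [hydef, hgdef, h, hxt v h]
        have ht2x : t2 ∈ Finset.univ.image x :=
          Finset.image_subset_image (Finset.subset_univ S) ht2mem
        have himg : (Finset.univ.image x).image g
            = ((Finset.univ.image x).erase t2).image g := by
          refine Finset.Subset.antisymm ?_
            (Finset.image_subset_image (Finset.erase_subset _ _))
          intro s hs
          obtain ⟨s0, hs0, rfl⟩ := Finset.mem_image.mp hs
          by_cases h : s0 = t2
          · have hgt2 : g s0 = g t := by
              rw [h]; simp [hgdef, ht2gt.ne', hΔdef, sub_sub_cancel]
            rw [hgt2]
            exact Finset.mem_image_of_mem g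
              (Finset.mem_erase.mpr ⟨ht2gt.ne, ht_mem⟩)
          · exact Finset.mem_image_of_mem g (Finset.mem_erase.mpr ⟨h, hs0⟩)
        have h1 : (Finset.univ.image x).card ≥ 1 := by
          rw [← Finset.card_pos] at hne; omega
        calc (Finset.univ.image y).card
            = ((Finset.univ.image x).image g).card := by
              rw [hyg, Finset.image_image]
          _ = (((Finset.univ.image x).erase t2).image g).card := by rw [himg]
          _ ≤ ((Finset.univ.image x).erase t2).card := Finset.card_image_le
          _ = (Finset.univ.image x).card - 1 := Finset.card_erase_of_mem ht2x
          _ ≤ n := by omega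
      have ihy := ih y hcard'
      have hkey : ∑ v ∈ S, u v ≤ M * perim G S :=
        le_trans (le_abs_self _) (key S hSne hScne)
      have h2 : Δ * ∑ v ∈ S, u v ≤ Δ * (M * perim G S) :=
        mul_le_mul_of_nonneg_left hkey hΔ.le
      rw [hsum, htv, mul_add]
      have : Δ * (M * perim G S) = M * (Δ * perim G S) := by ring
      linarith

end Main

/-- For zero-mean `u` on a finite connected graph, the dual TV norm is the
maximum of `|⟨u, 1_S⟩| / per(S)` over nonempty subsets `S` with
`|S| ≤ |V|/2` such that the induced subgraph `G(S)` is connected. -/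
theorem dualNorm_eq_max_connected_subsets {V : Type*} [Fintype V] [DecidableEq V]
    [Nontrivial V] (G : SimpleGraph V) [DecidableRel G.Adj] (hG : G.Connected)
    (u : V → ℝ) (hu : ∑ v, u v = 0) :
    IsGreatest
      {r | ∃ S : Finset V, S.Nonempty ∧ 2 * S.card ≤ Fintype.card V ∧
        (G.induce (S : Set V)).Connected ∧
        r = |∑ v ∈ S, u v| / perim G S}
      (dualNorm G u) := by
  classical
  set T : Finset (Finset V) := Finset.univ.filter (fun S => S.Nonempty ∧
    2 * S.card ≤ Fintype.card V ∧ (G.induce (S : Set V)).Connected) with hTdef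
  obtain ⟨v, w, hvw⟩ := exists_pair_ne V
  have hsingconn : (G.induce (({v} : Finset V) : Set V)).Connected := by
    rw [SimpleGraph.connected_iff]
    constructor
    · rintro ⟨a, ha⟩ ⟨b, hb⟩
      have hab : a = b := by
        simp only [Finset.coe_singleton, Set.mem_singleton_iff] at ha hb
        rw [ha, hb]
      have : (⟨a, ha⟩ : (({v} : Finset V) : Set V)) = ⟨b, hb⟩ := Subtype.ext hab
      rw [this]
    · exact ⟨⟨v, by simp⟩⟩
  have hsing : ({v} : Finset V) ∈ T := by
    refine Finset.mem_filter.mpr ⟨Finset.mem_univ _, Finset.singleton_nonempty v, ?_, hsingconn⟩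
    have := Fintype.one_lt_card (α := V); simp; omega
  have hTne : T.Nonempty := ⟨{v}, hsing⟩
  set f : Finset V → ℝ := fun S => |∑ x ∈ S, u x| / perim G S with hfdef
  set M := T.sup' hTne f with hMdef
  have hub : ∀ S ∈ T, f S ≤ M := fun S hS => Finset.le_sup' f hS
  obtain ⟨S₀, hS₀T, hS₀⟩ := Finset.exists_mem_eq_sup' hTne f
  rw [← hMdef] at hS₀
  obtain ⟨-, hS₀ne, hS₀half, hS₀conn⟩ := Finset.mem_filter.mp hS₀T
  have hScne : ∀ S : Finset V, S.Nonempty → 2 * S.card ≤ Fintype.card V → Sᶜ.Nonempty := by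
    intro S h1 h2
    rw [← Finset.card_pos, Finset.card_compl]
    have h3 : 1 ≤ S.card := Finset.card_pos.mpr h1
    omega
  have hM0 : 0 ≤ M := le_trans (div_nonneg (abs_nonneg _) (perim_nonneg G _)) (hub _ hsing)
  have hMdesc : ∀ S : Finset V, S.Nonempty → 2 * S.card ≤ Fintype.card V →
      (G.induce (S : Set V)).Connected → |∑ x ∈ S, u x| / perim G S ≤ M := by
    intro S h1 h2 h3
    exact hub S (Finset.mem_filter.mpr ⟨Finset.mem_univ _, h1, h2, h3⟩)
  have kb := key_bound G hG u M hMdesc hu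
  have cb := coarea_bound G hG u M hM0 kb hu
  have hp0 : 0 < perim G S₀ := perim_pos G hG S₀ hS₀ne (hScne S₀ hS₀ne hS₀half)
  -- M belongs to the dual set
  set p := perim G S₀ with hpdef
  set ε : ℝ := if (0:ℝ) ≤ ∑ x ∈ S₀, u x then 1 else -1 with hεdef
  have hεabs : |ε| = 1 := by
    rw [hεdef]; split <;> norm_num
  have hεsum : ε * ∑ x ∈ S₀, u x = |∑ x ∈ S₀, u x| := by
    rw [hεdef]
    split
    · rw [abs_of_nonneg (by assumption)]; ring
    · rw [abs_of_neg (by linarith [not_le.mp (by assumption)])]; ring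
  set c : ℝ := (S₀.card : ℝ) / (Fintype.card V : ℝ) with hcdef
  have hcardV : 0 < (Fintype.card V : ℝ) := by
    have := Fintype.card_pos (α := V)
    exact_mod_cast this
  set x0 : V → ℝ := fun v => (ε / p) * (if v ∈ S₀ then 1 else 0) + (-(ε * c) / p) with hx0def
  have hx0sum : ∑ v, x0 v = 0 := by
    rw [hx0def]
    rw [Finset.sum_add_distrib, ← Finset.mul_sum, Finset.sum_const, Finset.card_univ]
    have hind : ∑ v : V, (if v ∈ S₀ then (1:ℝ) else 0) = (S₀.card : ℝ) := by
      rw [Finset.sum_ite_mem, Finset.univ_inter, Finset.sum_const, nsmul_eq_mul, mul_one]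
    rw [hind, nsmul_eq_mul, hcdef]
    field_simp
    ring
  have hx0tv : tvNorm G x0 = 1 := by
    rw [hx0def]
    rw [tv_affine G (ε / p) (-(ε * c) / p) (fun v => if v ∈ S₀ then 1 else 0)]
    rw [abs_div, hεabs, abs_of_pos hp0]
    show 1 / p * perim G S₀ = 1
    field_simp
    exact hpdef.symm
  have hx0ip : ∑ v, x0 v * u v = M := by
    rw [hx0def]
    have hpt : ∀ v, ((ε / p) * (if v ∈ S₀ then 1 else 0) + (-(ε * c) / p)) * u v
        = (ε / p) * (if v ∈ S₀ then u v else 0) + (-(ε * c) / p) * u v := by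
      intro v; split <;> ring
    rw [Finset.sum_congr rfl fun v _ => hpt v, Finset.sum_add_distrib,
      ← Finset.mul_sum, ← Finset.mul_sum, Finset.sum_ite_mem, Finset.univ_inter, hu, mul_zero,
      add_zero, hS₀, hfdef]
    show ε / p * ∑ x ∈ S₀, u x = |∑ x ∈ S₀, u x| / perim G S₀
    rw [← hpdef, div_mul_eq_mul_div, hεsum]
  set dset : Set ℝ :=
    {r | ∃ x : V → ℝ, (∑ v, x v = 0) ∧ tvNorm G x ≤ 1 ∧ r = ∑ v, x v * u v} with hdset
  have hMmem : M ∈ dset := ⟨x0, hx0sum, le_of_eq hx0tv, hx0ip.symm⟩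
  have hbdd : ∀ r ∈ dset, r ≤ M := by
    rintro r ⟨x, hx1, hx2, rfl⟩
    calc ∑ v, x v * u v ≤ M * tvNorm G x := cb x
      _ ≤ M * 1 := mul_le_mul_of_nonneg_left hx2 hM0
      _ = M := mul_one M
  have hdn : dualNorm G u = M := by
    rw [dualNorm, ← hdset]
    exact le_antisymm (csSup_le ⟨M, hMmem⟩ hbdd) (le_csSup ⟨M, hbdd⟩ hMmem)
  constructor
  · exact ⟨S₀, hS₀ne, hS₀half, hS₀conn, by rw [hdn, hS₀]⟩
  · rintro r ⟨S, h1, h2, h3, rfl⟩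
    rw [hdn]
    exact hMdesc S h1 h2 h3
end
end

section
/- Let V be a finite set with |V| ≥ 2, and let B₀ = { u ∈ ℝ^V : Σ_v u(v) = 0 and ‖u‖_∞ ≤ 1 }. Then the set of extremal points of the convex polytope B₀ is exactly the set 𝒰 of vectors all of whose coordinates are ±1 except, when |V| is odd, exactly one coordinate equal to 0, with the numbers of +1's and −1's balanced so the coordinates sum to zero (i.e., all permutations of the vector d = (−1,…,−1,0,1,…,1) if |V| is odd, and of d = (−1,…,−1,1,…,1) if |V| is even). -/
open Finset

noncomputable section

private lemma forced_one (a b x y : ℝ) (ha : 0<a) (hb : 0<b) (hab : a+b=1)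
    (hx : x ≤ 1) (hy : y ≤ 1) (h : a*x+b*y = 1) : x = 1 := by nlinarith

private lemma forced_neg_one (a b x y : ℝ) (ha : 0<a) (hb : 0<b) (hab : a+b=1)
    (hx : -1 ≤ x) (hy : -1 ≤ y) (h : a*x+b*y = -1) : x = -1 := by nlinarith

/-- Extremal points of the polytope `B₀ = {u : ∑ u = 0, ‖u‖_∞ ≤ 1}`:
they are exactly the zero-mean vectors with all coordinates `±1`, except
exactly one coordinate equal to `0` when `|V|` is odd. -/
theorem extremePoints_B0 {V : Type*} [Fintype V] [DecidableEq V]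
    (h2 : 2 ≤ Fintype.card V) :
    Set.extremePoints ℝ {u : V → ℝ | (∑ v, u v = 0) ∧ ∀ v, |u v| ≤ 1}
      = {u : V → ℝ | (∑ v, u v = 0) ∧ (∀ v, u v = 1 ∨ u v = -1 ∨ u v = 0) ∧
          (Finset.univ.filter fun v => u v = 0).card
            = (if Even (Fintype.card V) then 0 else 1)} := by
  ext u
  constructor
  · rintro ⟨⟨hsum, hle⟩, hext⟩
    -- Step 1: at most one coordinate lies strictly inside (-1,1)
    have key : ∀ v w : V, |u v| < 1 → |u w| < 1 → v = w := by
      intro v w hv hw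
      by_contra hvw
      set ε : ℝ := min (1 - |u v|) (1 - |u w|) with hεdef
      have hε0 : 0 < ε := lt_min (by linarith) (by linarith)
      have hεv : ε ≤ 1 - |u v| := min_le_left _ _
      have hεw : ε ≤ 1 - |u w| := min_le_right _ _
      set z : V → ℝ := Pi.single v ε - Pi.single w ε with hzdef
      have hzv : z v = ε := by
        simp [hzdef, Pi.single_eq_same, Pi.single_eq_of_ne hvw]
      have hzsum : ∑ t, z t = 0 := by
        simp [hzdef, Finset.sum_sub_distrib, Finset.sum_pi_single']
      have hzbd : ∀ t, |u t + z t| ≤ 1 ∧ |u t - z t| ≤ 1 := by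
        intro t
        by_cases h1 : t = v
        · subst h1
          have hz : z t = ε := hzv
          rw [hz]
          constructor <;> rw [abs_le] <;>
            constructor <;> linarith [le_abs_self (u t), neg_abs_le (u t)]
        · by_cases h2 : t = w
          · subst h2
            have hz : z t = -ε := by
              simp [hzdef, Pi.single_eq_same, Pi.single_eq_of_ne h1]
            rw [hz]
            constructor <;> rw [abs_le] <;>
              constructor <;> linarith [le_abs_self (u t), neg_abs_le (u t)]
          · have hz : z t = 0 := by
              simp [hzdef, Pi.single_eq_of_ne h1, Pi.single_eq_of_ne h2]
            rw [hz]
            constructor <;> simpa using hle t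
      have hxmem : (u + z) ∈ {u : V → ℝ | (∑ v, u v = 0) ∧ ∀ v, |u v| ≤ 1} := by
        refine ⟨?_, fun t => (hzbd t).1⟩
        simp [Finset.sum_add_distrib, hsum, hzsum]
      have hymem : (u - z) ∈ {u : V → ℝ | (∑ v, u v = 0) ∧ ∀ v, |u v| ≤ 1} := by
        refine ⟨?_, fun t => (hzbd t).2⟩
        simp [Finset.sum_sub_distrib, hsum, hzsum]
      have hseg : u ∈ openSegment ℝ (u + z) (u - z) := by
        refine ⟨1/2, 1/2, by norm_num, by norm_num, by norm_num, ?_⟩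
        funext t
        simp only [Pi.smul_apply, Pi.add_apply, Pi.sub_apply, smul_eq_mul]
        ring
      have := hext hxmem hymem hseg
      have : (u + z) v = u v := congrFun this v
      simp only [Pi.add_apply, hzv] at this
      linarith
    by_cases hint : ∃ v₀, |u v₀| < 1
    · obtain ⟨v₀, hv₀⟩ := hint
      have habs1 : ∀ v, v ≠ v₀ → u v = 1 ∨ u v = -1 := by
        intro v hv
        have h1 : |u v| = 1 := by
          rcases lt_or_eq_of_le (hle v) with h | h
          · exact absurd (key v v₀ h hv₀) hv
          · exact h
        exact abs_eq (by norm_num : (0:ℝ) ≤ 1) |>.mp h1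
      -- sum over erased set
      set s := Finset.univ.erase v₀ with hs
      have hserase : ∑ v ∈ s, u v = -u v₀ := by
        have := Finset.sum_erase_add Finset.univ u (Finset.mem_univ v₀)
        rw [hsum] at this
        linarith
      set k := (s.filter fun v => u v = 1).card with hk
      have hsum2 : ∑ v ∈ s, (u v + 1) = 2 * (k : ℝ) := by
        have : ∀ v ∈ s, u v + 1 = if u v = 1 then (2:ℝ) else 0 := by
          intro v hv
          rcases habs1 v (Finset.ne_of_mem_erase hv) with h | h <;> norm_num [h]
        rw [Finset.sum_congr rfl this, ← Finset.sum_filter, Finset.sum_const,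
          nsmul_eq_mul]
        ring
      have hscard : s.card = Fintype.card V - 1 := by
        simp [hs, Finset.card_erase_of_mem]
      have hcardV : 1 ≤ Fintype.card V := by omega
      have hval : u v₀ = ((s.card : ℤ) - 2 * k : ℤ) := by
        have h1 : ∑ v ∈ s, (u v + 1) = -u v₀ + s.card := by
          rw [Finset.sum_add_distrib, hserase, Finset.sum_const]
          simp
        rw [hsum2] at h1
        push_cast
        linarith
      have hm0 : ((s.card : ℤ) - 2 * k : ℤ) = 0 := by
        have : |(((s.card : ℤ) - 2 * k : ℤ) : ℝ)| < 1 := by rw [← hval]; exact hv₀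
        have h3 : |((s.card : ℤ) - 2 * k : ℤ)| < 1 := by exact_mod_cast this
        rw [abs_lt] at h3
        omega
      have huv₀ : u v₀ = 0 := by rw [hval, hm0]; simp
      have hodd : ¬ Even (Fintype.card V) := by
        have : (s.card : ℤ) = 2 * k := by omega
        have hc : Fintype.card V - 1 = 2 * k := by
          rw [← hscard]; exact_mod_cast this
        intro ⟨m, hm⟩
        omega
      have hfilter : (Finset.univ.filter fun v => u v = 0) = {v₀} := by
        ext v
        simp only [Finset.mem_filter, Finset.mem_univ, true_and, Finset.mem_singleton]
        constructor
        · intro h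
          by_contra hv
          rcases habs1 v hv with h' | h' <;> rw [h'] at h <;> norm_num at h
        · rintro rfl; exact huv₀
      refine ⟨hsum, ?_, ?_⟩
      · intro v
        by_cases hv : v = v₀
        · subst hv; right; right; exact huv₀
        · rcases habs1 v hv with h | h
          · left; exact h
          · right; left; exact h
      · rw [hfilter, if_neg hodd]
        simp
    · push_neg at hint
      have habs1 : ∀ v, u v = 1 ∨ u v = -1 := by
        intro v
        have h1 : |u v| = 1 := le_antisymm (hle v) (hint v)
        exact abs_eq (by norm_num : (0:ℝ) ≤ 1) |>.mp h1
      set k := (Finset.univ.filter fun v : V => u v = 1).card with hk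
      have hsum2 : ∑ v, (u v + 1) = 2 * (k : ℝ) := by
        have : ∀ v ∈ Finset.univ, u v + 1 = if u v = 1 then (2:ℝ) else 0 := by
          intro v _
          rcases habs1 v with h | h <;> norm_num [h]
        rw [Finset.sum_congr rfl this, ← Finset.sum_filter, Finset.sum_const,
          nsmul_eq_mul]
        ring
      have hcardeq : (Fintype.card V : ℝ) = 2 * k := by
        rw [← hsum2, Finset.sum_add_distrib, hsum, Finset.sum_const]
        simp
      have heven : Even (Fintype.card V) := by
        have : Fintype.card V = 2 * k := by exact_mod_cast hcardeq
        exact ⟨k, by omega⟩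
      have hfilter : (Finset.univ.filter fun v => u v = 0) = ∅ := by
        ext v
        simp only [Finset.mem_filter, Finset.mem_univ, true_and, Finset.notMem_empty,
          iff_false]
        intro h
        rcases habs1 v with h' | h' <;> rw [h'] at h <;> norm_num at h
      refine ⟨hsum, ?_, ?_⟩
      · intro v
        rcases habs1 v with h | h
        · left; exact h
        · right; left; exact h
      · rw [hfilter, if_pos heven]
        simp
  · rintro ⟨hsum, htri, hcard⟩
    have hmem : u ∈ {u : V → ℝ | (∑ v, u v = 0) ∧ ∀ v, |u v| ≤ 1} := by
      refine ⟨hsum, fun v => ?_⟩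
      rcases htri v with h | h | h <;> rw [h] <;> norm_num
    refine ⟨hmem, ?_⟩
    rintro x ⟨hxs, hxle⟩ y ⟨hys, hyle⟩ ⟨a, b, ha, hb, hab, hxy⟩
    have hcard1 : (Finset.univ.filter fun v => u v = 0).card ≤ 1 := by
      rw [hcard]; split_ifs <;> norm_num
    have hagree : ∀ v, u v ≠ 0 → x v = u v ∧ y v = u v := by
      intro v hv
      have hxv := abs_le.mp (hxle v)
      have hyv := abs_le.mp (hyle v)
      have hcomb : a * x v + b * y v = u v := by
        have := congrFun hxy v
        simpa [smul_eq_mul] using this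
      rcases htri v with h | h | h
      · rw [h] at hcomb ⊢
        exact ⟨forced_one a b (x v) (y v) ha hb hab hxv.2 hyv.2 hcomb,
          forced_one b a (y v) (x v) hb ha (by linarith) hyv.2 hxv.2 (by linarith)⟩
      · rw [h] at hcomb ⊢
        exact ⟨forced_neg_one a b (x v) (y v) ha hb hab hxv.1 hyv.1 hcomb,
          forced_neg_one b a (y v) (x v) hb ha (by linarith) hyv.1 hxv.1 (by linarith)⟩
      · exact absurd h hv
    have heq : ∀ z : V → ℝ, (∑ v, z v = 0) → (∀ v, u v ≠ 0 → z v = u v) → z = u := by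
      intro z hzs hza
      funext v
      by_cases hv : u v = 0
      · have hZ : ∀ w, u w = 0 → w = v := by
          intro w hw
          exact Finset.card_le_one.mp hcard1 w (by simp [hw]) v (by simp [hv])
        have hsx : ∑ w, (z w - u w) = z v - u v := by
          refine Finset.sum_eq_single v (fun w _ hwv => ?_) (by simp)
          have hw : u w ≠ 0 := fun h => hwv (hZ w h)
          rw [hza w hw]; ring
        have h0 : ∑ w, (z w - u w) = 0 := by
          rw [Finset.sum_sub_distrib, hzs, hsum]; ring
        rw [hsx] at h0
        linarith
      · exact hza v hv
    exact heq x hxs (fun v hv => (hagree v hv).1)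
end
end

section
/- Let H be a finite-dimensional Euclidean space and f : H → ℝ convex and continuous with bounded lower level sets {x : f(x) ≤ y}, and suppose there is C > 0 with ‖g‖ ≤ C(1+‖x‖) for all x and all g ∈ ∂f(x). Let (γ_n) be positive with Σγ_n = ∞ and Σγ_n² < ∞. Then any sequence defined by x_{n+1} = x_n − γ_n g_n with g_n ∈ ∂f(x_n) converges to the set of minimizers {x : f(x) = inf f}. -/
open Filter
open scoped RealInnerProductSpace

set_option maxHeartbeats 1000000

/-- Convergence of the subgradient descent method: for `f` convex continuous
with bounded lower level sets and linearly bounded subgradients, with step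
sizes `γ_n > 0`, `∑γ_n = ∞`, `∑γ_n² < ∞`, the iterates `x_{n+1} = x_n - γ_n g_n`
(with `g_n ∈ ∂f(x_n)`) converge to the set of minimizers of `f`. -/
theorem subgradient_descent_converges
    {H : Type*} [NormedAddCommGroup H] [InnerProductSpace ℝ H]
    [FiniteDimensional ℝ H]
    (f : H → ℝ) (hconv : ConvexOn ℝ Set.univ f) (hcont : Continuous f)
    (hlevel : ∀ y : ℝ, Bornology.IsBounded {x : H | f x ≤ y})
    (C : ℝ) (hC : 0 < C)
    (hgrow : ∀ (x g : H), (∀ y : H, f x + ⟪g, y - x⟫ ≤ f y) →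
      ‖g‖ ≤ C * (1 + ‖x‖))
    (γ : ℕ → ℝ) (hγpos : ∀ n, 0 < γ n)
    (hγ1 : Tendsto (fun N => ∑ n ∈ Finset.range N, γ n) atTop atTop)
    (hγ2 : Summable fun n => (γ n) ^ 2)
    (x g : ℕ → H)
    (hg : ∀ n, ∀ y : H, f (x n) + ⟪g n, y - x n⟫ ≤ f y)
    (hx : ∀ n, x (n + 1) = x n - γ n • g n) :
    Tendsto (fun n => Metric.infDist (x n) {z : H | ∀ y : H, f z ≤ f y})
      atTop (nhds 0) := by
  classical
  set S : Set H := {z : H | ∀ y : H, f z ≤ f y} with hSdef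
  -- a minimizer exists
  have hK : IsCompact {w : H | f w ≤ f 0} :=
    Metric.isCompact_of_isClosed_isBounded (isClosed_le hcont continuous_const)
      (hlevel (f 0))
  have hK0 : (0 : H) ∈ {w : H | f w ≤ f 0} := Set.mem_setOf.2 (le_refl _)
  obtain ⟨xs, hxsK, hxsmin⟩ := hK.exists_isMinOn ⟨0, hK0⟩ hcont.continuousOn
  have hxsS : xs ∈ S := by
    intro y
    by_cases hy : f y ≤ f 0
    · exact hxsmin hy
    · exact le_trans (hxsmin hK0) (le_of_not_ge hy)
  set m : ℝ := f xs with hmdef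
  have hSiff : ∀ z : H, z ∈ S ↔ f z ≤ m := by
    intro z
    constructor
    · intro hz; exact hz xs
    · intro hz y; exact le_trans hz (hxsS y)
  have hSclosed : IsClosed S := by
    have : S = f ⁻¹' Set.Iic m := by
      ext z; exact hSiff z
    rw [this]; exact IsClosed.preimage hcont isClosed_Iic
  have hSne : S.Nonempty := ⟨xs, hxsS⟩
  -- key one-step inequality
  have key : ∀ (n : ℕ) (z : H), ‖x (n + 1) - z‖ ^ 2 ≤
      ‖x n - z‖ ^ 2 - 2 * γ n * (f (x n) - f z) + (γ n) ^ 2 * ‖g n‖ ^ 2 := by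
    intro n z
    have hsub := hg n z
    have hz1 : ⟪g n, z - x n⟫ = ⟪g n, z⟫ - ⟪g n, x n⟫ := inner_sub_right _ _ _
    have hz2 : ⟪g n, x n - z⟫ = ⟪g n, x n⟫ - ⟪g n, z⟫ := inner_sub_right _ _ _
    have hinner : f (x n) - f z ≤ ⟪g n, x n - z⟫ := by rw [hz2]; linarith [hsub, hz1.symm.le, hz1.le]
    have hexp : ‖x (n + 1) - z‖ ^ 2 =
        ‖x n - z‖ ^ 2 - 2 * (γ n * ⟪g n, x n - z⟫) + (γ n) ^ 2 * ‖g n‖ ^ 2 := by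
      rw [hx n]
      have h1 : x n - γ n • g n - z = (x n - z) - γ n • g n := by abel
      rw [h1, norm_sub_sq_real, real_inner_smul_right, norm_smul, real_inner_comm]
      simp [mul_pow, sq_abs]
      try ring
    rw [hexp]
    have hγ := (hγpos n).le
    nlinarith [mul_le_mul_of_nonneg_left hinner hγ]
  have hgn : ∀ n, ‖g n‖ ≤ C * (1 + ‖x n‖) := fun n => hgrow _ _ (hg n)
  set a : ℕ → ℝ := fun n => ‖x n - xs‖ ^ 2 with hadef
  have hanonneg : ∀ n, 0 ≤ a n := fun n => sq_nonneg _
  set D : ℝ := 2 * C ^ 2 * (1 + ‖xs‖) ^ 2 with hDdef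
  have hDnonneg : 0 ≤ D := by positivity
  have hg2 : ∀ n, ‖g n‖ ^ 2 ≤ D + 2 * C ^ 2 * a n := by
    intro n
    have h1 := hgn n
    have h2 : ‖x n‖ ≤ ‖xs‖ + ‖x n - xs‖ := by
      have := norm_sub_norm_le (x n) xs
      linarith
    have hgnn := norm_nonneg (g n)
    have hxnn := norm_nonneg (x n)
    have hxsn := norm_nonneg xs
    have htn := norm_nonneg (x n - xs)
    have h3 : ‖g n‖ ^ 2 ≤ (C * (1 + ‖x n‖)) ^ 2 := by
      apply pow_le_pow_left₀ hgnn h1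
    have h4 : (1 + ‖x n‖) ^ 2 ≤ 2 * (1 + ‖xs‖) ^ 2 + 2 * ‖x n - xs‖ ^ 2 := by
      nlinarith [sq_nonneg (1 + ‖xs‖ - ‖x n - xs‖)]
    show ‖g n‖ ^ 2 ≤ 2 * C ^ 2 * (1 + ‖xs‖) ^ 2 + 2 * C ^ 2 * ‖x n - xs‖ ^ 2
    rw [mul_pow] at h3
    nlinarith [mul_le_mul_of_nonneg_left h4 (sq_nonneg C)]
  have hδ : ∀ n, 0 ≤ f (x n) - m := fun n => sub_nonneg.2 (hxsS (x n))
  -- boundedness of a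
  have arec : ∀ n, a (n + 1) ≤ a n * (1 + 2 * C ^ 2 * (γ n) ^ 2) + D * (γ n) ^ 2 := by
    intro n
    have h1 := key n xs
    have h2 := hg2 n
    have h3 := hδ n
    have hγ := (hγpos n).le
    have hγ2' := sq_nonneg (γ n)
    have : a (n + 1) ≤ a n - 2 * γ n * (f (x n) - m) + (γ n) ^ 2 * ‖g n‖ ^ 2 := h1
    nlinarith [mul_nonneg hγ h3]
  set T : ℝ := ∑' n, (γ n) ^ 2 with hTdef
  have hpartT : ∀ n, ∑ k ∈ Finset.range n, (γ k) ^ 2 ≤ T :=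
    fun n => Summable.sum_le_tsum _ (fun i _ => sq_nonneg _) hγ2
  have hTnn : 0 ≤ T := by
    have := hpartT 0
    simpa using le_trans (by simp) this
  have hind : ∀ n, a n ≤ (a 0 + D * ∑ k ∈ Finset.range n, (γ k) ^ 2) *
      ∏ k ∈ Finset.range n, (1 + 2 * C ^ 2 * (γ k) ^ 2) := by
    intro n
    induction n with
    | zero => simp
    | succ n ih =>
      have hprod1 : (1 : ℝ) ≤ ∏ k ∈ Finset.range n, (1 + 2 * C ^ 2 * (γ k) ^ 2) := by
        have h0 : ∏ k ∈ Finset.range n, (1 : ℝ) ≤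
            ∏ k ∈ Finset.range n, (1 + 2 * C ^ 2 * (γ k) ^ 2) := by
          apply Finset.prod_le_prod
          · intro i _; norm_num
          · intro i _; nlinarith [sq_nonneg (γ i), sq_nonneg C]
        simpa using h0
      have hfac : (1 : ℝ) ≤ 1 + 2 * C ^ 2 * (γ n) ^ 2 := by
        nlinarith [sq_nonneg (γ n), sq_nonneg C]
      have hsumnn : 0 ≤ ∑ k ∈ Finset.range n, (γ k) ^ 2 :=
        Finset.sum_nonneg fun i _ => sq_nonneg _
      rw [Finset.prod_range_succ, Finset.sum_range_succ]
      have h1 := arec n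
      have ha0 := hanonneg 0
      have han := hanonneg n
      have henn : 0 ≤ D * (γ n) ^ 2 := mul_nonneg hDnonneg (sq_nonneg (γ n))
      have hPc : (1:ℝ) ≤ (∏ k ∈ Finset.range n, (1 + 2 * C ^ 2 * (γ k) ^ 2)) *
          (1 + 2 * C ^ 2 * (γ n) ^ 2) := by nlinarith
      have t1 : a n * (1 + 2 * C ^ 2 * (γ n) ^ 2) ≤
          ((a 0 + D * ∑ k ∈ Finset.range n, (γ k) ^ 2) *
            ∏ k ∈ Finset.range n, (1 + 2 * C ^ 2 * (γ k) ^ 2)) *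
            (1 + 2 * C ^ 2 * (γ n) ^ 2) :=
        mul_le_mul_of_nonneg_right ih (le_trans zero_le_one hfac)
      have t2 : D * (γ n) ^ 2 ≤ (D * (γ n) ^ 2) *
          ((∏ k ∈ Finset.range n, (1 + 2 * C ^ 2 * (γ k) ^ 2)) *
            (1 + 2 * C ^ 2 * (γ n) ^ 2)) :=
        le_mul_of_one_le_right henn hPc
      nlinarith [t1, t2]
  have hprodexp : ∀ n, ∏ k ∈ Finset.range n, (1 + 2 * C ^ 2 * (γ k) ^ 2) ≤
      Real.exp (2 * C ^ 2 * T) := by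
    intro n
    calc ∏ k ∈ Finset.range n, (1 + 2 * C ^ 2 * (γ k) ^ 2)
        ≤ ∏ k ∈ Finset.range n, Real.exp (2 * C ^ 2 * (γ k) ^ 2) := by
          apply Finset.prod_le_prod
          · intro i _; positivity
          · intro i _
            have := Real.add_one_le_exp (2 * C ^ 2 * (γ i) ^ 2)
            linarith
      _ = Real.exp (∑ k ∈ Finset.range n, 2 * C ^ 2 * (γ k) ^ 2) := (Real.exp_sum _ _).symm
      _ ≤ Real.exp (2 * C ^ 2 * T) := by
          apply Real.exp_le_exp.2
          rw [← Finset.mul_sum]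
          have := hpartT n
          nlinarith [sq_nonneg C]
  set B : ℝ := (a 0 + D * T) * Real.exp (2 * C ^ 2 * T) with hBdef
  have habound : ∀ n, a n ≤ B := by
    intro n
    calc a n ≤ (a 0 + D * ∑ k ∈ Finset.range n, (γ k) ^ 2) *
        ∏ k ∈ Finset.range n, (1 + 2 * C ^ 2 * (γ k) ^ 2) := hind n
      _ ≤ B := by
        rw [hBdef]
        apply mul_le_mul
        · have := hpartT n
          nlinarith
        · exact hprodexp n
        · apply Finset.prod_nonneg; intro i _; nlinarith [sq_nonneg (γ i), sq_nonneg C]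
        · have ha0 := hanonneg 0
          nlinarith [mul_nonneg hDnonneg hTnn]
  set G : ℝ := D + 2 * C ^ 2 * B with hGdef
  have hgG : ∀ n, ‖g n‖ ^ 2 ≤ G := by
    intro n
    have := hg2 n
    have := habound n
    rw [hGdef]
    nlinarith [sq_nonneg C]
  have hGnn : 0 ≤ G := le_trans (sq_nonneg _) (hgG 0)
  set ε' : ℕ → ℝ := fun n => (γ n) ^ 2 * G with hε'def
  have hε'nn : ∀ n, 0 ≤ ε' n := fun n => mul_nonneg (sq_nonneg _) hGnn
  have hε'sum : Summable ε' := hγ2.mul_right G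
  set d : ℕ → ℝ := fun n => Metric.infDist (x n) S with hddef
  have hdnn : ∀ n, 0 ≤ d n := fun n => Metric.infDist_nonneg
  -- key inequality for distances to S
  have key2 : ∀ n, d (n + 1) ^ 2 ≤ d n ^ 2 - 2 * γ n * (f (x n) - m) + ε' n := by
    intro n
    obtain ⟨z, hzS, hdz⟩ := hSclosed.exists_infDist_eq_dist hSne (x n)
    have hfz : f z = m := le_antisymm ((hSiff z).1 hzS) (hxsS z)
    have h1 : d (n + 1) ≤ ‖x (n + 1) - z‖ := by
      rw [← dist_eq_norm]
      exact Metric.infDist_le_dist_of_mem hzS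
    have h2 : d (n + 1) ^ 2 ≤ ‖x (n + 1) - z‖ ^ 2 :=
      pow_le_pow_left₀ (hdnn _) h1 2
    have h3 := key n z
    have h4 : ‖x n - z‖ ^ 2 = d n ^ 2 := by
      rw [hddef]; simp only []
      rw [hdz, dist_eq_norm]
    have h5 : (γ n) ^ 2 * ‖g n‖ ^ 2 ≤ ε' n := by
      rw [hε'def]
      exact mul_le_mul_of_nonneg_left (hgG n) (sq_nonneg _)
    rw [hfz] at h3
    nlinarith
  -- summability of γ n * (f (x n) - m)
  have hsumδ : Summable (fun n => γ n * (f (x n) - m)) := by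
    have hbound : ∀ n, d n ^ 2 + ∑ k ∈ Finset.range n, 2 * (γ k * (f (x k) - m)) ≤
        d 0 ^ 2 + ∑ k ∈ Finset.range n, ε' k := by
      intro n
      induction n with
      | zero => simp
      | succ n ih =>
        have := key2 n
        rw [Finset.sum_range_succ, Finset.sum_range_succ]
        nlinarith
    have hb2 : ∀ n, ∑ k ∈ Finset.range n, 2 * (γ k * (f (x k) - m)) ≤
        d 0 ^ 2 + ∑' k, ε' k := by
      intro n
      have h1 := hbound n
      have h2 : ∑ k ∈ Finset.range n, ε' k ≤ ∑' k, ε' k :=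
        Summable.sum_le_tsum _ (fun i _ => hε'nn i) hε'sum
      nlinarith [sq_nonneg (d n)]
    apply summable_of_sum_range_le
      (c := (d 0 ^ 2 + ∑' k, ε' k) / 2)
      (fun n => mul_nonneg (hγpos n).le (hδ n))
    intro n
    have h3 := hb2 n
    have h4 : ∑ k ∈ Finset.range n, 2 * (γ k * (f (x k) - m)) =
        2 * ∑ k ∈ Finset.range n, γ k * (f (x k) - m) := by
      rw [Finset.mul_sum]
    linarith
  -- infinitely often small suboptimality
  have hio : ∀ η : ℝ, 0 < η → ∀ N : ℕ, ∃ n, N ≤ n ∧ f (x n) - m ≤ η := by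
    intro η hη N
    by_contra hcon
    push_neg at hcon
    have hsh : Summable (fun k => γ (k + N) * (f (x (k + N)) - m)) :=
      (summable_nat_add_iff N).2 hsumδ
    have hγsh : Summable (fun k => γ (k + N)) := by
      apply Summable.of_nonneg_of_le (fun k => (hγpos _).le) (fun k => ?_)
        (hsh.mul_left η⁻¹)
      have h1 : η < f (x (k + N)) - m := hcon (k + N) (Nat.le_add_left N k)
      have h2 := (hγpos (k + N)).le
      have h3 : η * γ (k + N) ≤ γ (k + N) * (f (x (k + N)) - m) := by nlinarith
      calc γ (k + N) = η⁻¹ * (η * γ (k + N)) := by field_simp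
        _ ≤ η⁻¹ * (γ (k + N) * (f (x (k + N)) - m)) :=
            mul_le_mul_of_nonneg_left h3 (by positivity)
    have hγsum : Summable γ := (summable_nat_add_iff N).1 hγsh
    exact not_tendsto_atTop_of_tendsto_nhds hγsum.hasSum.tendsto_sum_nat hγ1
  -- small suboptimality forces small distance to S
  have hetalem : ∀ ε : ℝ, 0 < ε →
      ∃ η : ℝ, 0 < η ∧ ∀ z : H, f z ≤ m + η → Metric.infDist z S ≤ ε := by
    intro ε hε
    by_contra hcon
    push_neg at hcon
    have hex : ∀ k : ℕ, ∃ z : H, f z ≤ m + 1 / (k + 1) ∧ ε < Metric.infDist z S := by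
      intro k
      obtain ⟨z, hz1, hz2⟩ := hcon (1 / ((k : ℝ) + 1)) (by positivity)
      exact ⟨z, hz1, hz2⟩
    choose z hz1 hz2 using hex
    have hK1 : IsCompact {w : H | f w ≤ m + 1} :=
      Metric.isCompact_of_isClosed_isBounded (isClosed_le hcont continuous_const)
        (hlevel (m + 1))
    have hzK : ∀ k, z k ∈ {w : H | f w ≤ m + 1} := by
      intro k
      have hk1 : (1 : ℝ) / ((k : ℝ) + 1) ≤ 1 := by
        rw [div_le_one (by positivity)]
        linarith [Nat.cast_nonneg (α := ℝ) k]
      exact le_trans (hz1 k) (by linarith)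
    obtain ⟨w, hwK, φ, hφ, hφt⟩ := hK1.tendsto_subseq hzK
    have hfw : Tendsto (fun k => f (z (φ k))) atTop (nhds (f w)) :=
      (hcont.tendsto w).comp hφt
    have hub : Tendsto (fun k => m + 1 / ((φ k : ℝ) + 1)) atTop (nhds (m + 0)) :=
      Tendsto.const_add m
        (tendsto_one_div_add_atTop_nhds_zero_nat.comp hφ.tendsto_atTop)
    have hfw2 : f w ≤ m := by
      have := le_of_tendsto_of_tendsto' hfw (by simpa using hub)
        (fun k => hz1 (φ k))
      simpa using this
    have hwS : w ∈ S := (hSiff w).2 hfw2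
    have hdistt : Tendsto (fun k => Metric.infDist (z (φ k)) S) atTop
        (nhds (Metric.infDist w S)) :=
      ((Metric.continuous_infDist_pt S).tendsto w).comp hφt
    have h0 : Metric.infDist w S = 0 := Metric.infDist_zero_of_mem hwS
    have hge : ε ≤ Metric.infDist w S :=
      ge_of_tendsto hdistt (Eventually.of_forall fun k => (hz2 (φ k)).le)
    rw [h0] at hge
    linarith
  -- final convergence argument
  rw [Metric.tendsto_atTop]
  intro ε hε
  obtain ⟨η, hη0, hηprop⟩ := hetalem (ε / 2) (by linarith)
  have htail : Tendsto (fun i => ∑' k, ε' (k + i)) atTop (nhds 0) :=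
    tendsto_sum_nat_add ε'
  have hq : (0 : ℝ) < ε ^ 2 / 4 := by positivity
  obtain ⟨N, hN⟩ := eventually_atTop.1 (htail.eventually_lt_const hq)
  obtain ⟨n₀, hn₀N, hn₀δ⟩ := hio η hη0 N
  have hdle : ∀ n, f (x n) - m ≤ η → d n ≤ ε / 2 := by
    intro n hn
    exact hηprop (x n) (by linarith)
  have main : ∀ n, n₀ ≤ n → d n ^ 2 ≤ (ε / 2) ^ 2 + ∑ k ∈ Finset.Ico n₀ n, ε' k := by
    intro n hn
    induction n, hn using Nat.le_induction with
    | base =>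
      simp only [Finset.Ico_self, Finset.sum_empty, add_zero]
      exact pow_le_pow_left₀ (hdnn n₀) (hdle n₀ hn₀δ) 2
    | succ n hn ih =>
      rw [Finset.sum_Ico_succ_top hn]
      have hk := key2 n
      have hδn := hδ n
      have hγn := (hγpos n).le
      have hγδ : 0 ≤ γ n * (f (x n) - m) := mul_nonneg hγn hδn
      by_cases hc : f (x n) - m ≤ η
      · have hd2 : d n ^ 2 ≤ (ε / 2) ^ 2 :=
          pow_le_pow_left₀ (hdnn n) (hdle n hc) 2
        have hsum0 : 0 ≤ ∑ k ∈ Finset.Ico n₀ n, ε' k :=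
          Finset.sum_nonneg fun i _ => hε'nn i
        linarith
      · linarith
  refine ⟨n₀, fun n hn => ?_⟩
  have h1 := main n hn
  have h2 : ∑ k ∈ Finset.Ico n₀ n, ε' k ≤ ∑' j, ε' (j + n₀) := by
    rw [Finset.sum_Ico_eq_sum_range]
    have hsm : Summable (fun j => ε' (j + n₀)) := (summable_nat_add_iff n₀).2 hε'sum
    have := Summable.sum_le_tsum (f := fun j => ε' (j + n₀)) (Finset.range (n - n₀))
      (fun i _ => hε'nn _) hsm
    simpa [add_comm] using this
  have h3 : ∑' j, ε' (j + n₀) < ε ^ 2 / 4 := hN n₀ hn₀N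
  have h5 : d n < ε := by nlinarith [hdnn n]
  have : dist (d n) 0 = d n := by
    rw [Real.dist_eq, sub_zero, abs_of_nonneg (hdnn n)]
  calc dist (Metric.infDist (x n) S) 0 = d n := this
    _ < ε := h5
end

section
/- Let W be a real square matrix in block form W = [[W^R, W^S],[0, I]] indexed by a partition of vertices into regular set R and stubborn set S, where W is right stochastic (nonnegative entries, rows summing to 1), and suppose in the directed graph with edge (v,w) whenever W(v,w) > 0, every node of R has a directed path to some node of S. Then the spectral radius of W^R is strictly less than 1; equivalently zI − W^R is invertible for every complex z with |z| ≥ 1. -/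
open Finset

noncomputable section

/-- Linear gossip with stubborn agents: if `W = [[W^R, W^S],[0, I]]` is right
stochastic and every regular node has a directed path (in the positivity graph
of `W`) to some stubborn node, then `zI - W^R` is invertible for every complex
`z` with `|z| ≥ 1` (equivalently, the spectral radius of `W^R` is `< 1`). -/
theorem stubborn_gossip_spectral_radius
    {R S : Type*} [Fintype R] [Fintype S] [DecidableEq R] [DecidableEq S]
    (W : Matrix (R ⊕ S) (R ⊕ S) ℝ)
    (hnn : ∀ i j, 0 ≤ W i j) (hle : ∀ i j, W i j ≤ 1)
    (hrow : ∀ i, ∑ j, W i j = 1)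
    (hblock0 : ∀ (s : S) (r : R), W (Sum.inr s) (Sum.inl r) = 0)
    (hblockI : ∀ s s' : S, W (Sum.inr s) (Sum.inr s') = if s = s' then 1 else 0)
    (hpath : ∀ r : R, ∃ s : S,
      Relation.ReflTransGen (fun i j => 0 < W i j) (Sum.inl r) (Sum.inr s)) :
    ∀ z : ℂ, 1 ≤ ‖z‖ →
      IsUnit (z • (1 : Matrix R R ℂ)
        - (W.submatrix Sum.inl Sum.inl).map (fun a => (a : ℂ))) := by
  intro z hz
  by_contra hunit
  set M : Matrix R R ℂ :=
    z • (1 : Matrix R R ℂ) - (W.submatrix Sum.inl Sum.inl).map (fun a => (a : ℂ)) with hM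
  have hdet : M.det = 0 := by
    by_contra hd
    exact hunit ((Matrix.isUnit_iff_isUnit_det M).2 (isUnit_iff_ne_zero.2 hd))
  obtain ⟨v, hv, hMv⟩ := (Matrix.exists_mulVec_eq_zero_iff).2 hdet
  -- eigen-equation
  have heig : ∀ r : R, z * v r = ∑ r', (W (Sum.inl r) (Sum.inl r') : ℂ) * v r' := by
    intro r
    have h := congrFun hMv r
    have : (z • (1 : Matrix R R ℂ)
        - (W.submatrix Sum.inl Sum.inl).map (fun a => (a : ℂ))).mulVec v r = 0 := h
    rw [Matrix.sub_mulVec, Matrix.smul_mulVec, Matrix.one_mulVec] at this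
    have h2 : ((W.submatrix Sum.inl Sum.inl).map (fun a => (a : ℂ))).mulVec v r
        = ∑ r', (W (Sum.inl r) (Sum.inl r') : ℂ) * v r' := by
      simp [Matrix.mulVec, dotProduct]
    have h3 : z * v r - ∑ r', (W (Sum.inl r) (Sum.inl r') : ℂ) * v r' = 0 := by
      rw [← h2]; simpa using this
    exact sub_eq_zero.mp h3
  -- maximum modulus index
  obtain ⟨rne, hrne⟩ : ∃ r, v r ≠ 0 := by
    by_contra h
    push_neg at h
    exact hv (funext h)
  obtain ⟨r0, -, hr0⟩ := Finset.exists_max_image Finset.univ (fun r => ‖v r‖)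
    ⟨rne, Finset.mem_univ rne⟩
  set m := ‖v r0‖ with hm
  have hmpos : 0 < m := lt_of_lt_of_le (by simpa using hrne) (hr0 rne (Finset.mem_univ rne))
  have key : ∀ r : R, ‖v r‖ = m →
      (∀ s, W (Sum.inl r) (Sum.inr s) = 0) ∧
      (∀ r', 0 < W (Sum.inl r) (Sum.inl r') → ‖v r'‖ = m) := by
    intro r hrm
    have h2 : ‖∑ r', (W (Sum.inl r) (Sum.inl r') : ℂ) * v r'‖
        ≤ ∑ r', W (Sum.inl r) (Sum.inl r') * ‖v r'‖ := by
      refine le_trans (norm_sum_le _ _) (le_of_eq ?_)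
      refine Finset.sum_congr rfl fun r' _ => ?_
      rw [norm_mul, Complex.norm_real, Real.norm_of_nonneg (hnn _ _)]
    have h3 : ∑ r', W (Sum.inl r) (Sum.inl r') * ‖v r'‖
        ≤ ∑ r', W (Sum.inl r) (Sum.inl r') * m := by
      refine Finset.sum_le_sum fun r' _ => ?_
      exact mul_le_mul_of_nonneg_left (hr0 r' (Finset.mem_univ r')) (hnn _ _)
    have hsplit : (∑ r', W (Sum.inl r) (Sum.inl r')) +
        (∑ s, W (Sum.inl r) (Sum.inr s)) = 1 := by
      rw [← Fintype.sum_sum_type]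
      exact hrow (Sum.inl r)
    have hSnn : 0 ≤ ∑ s, W (Sum.inl r) (Sum.inr s) :=
      Finset.sum_nonneg fun s _ => hnn _ _
    have h4 : ∑ r', W (Sum.inl r) (Sum.inl r') ≤ 1 := by linarith
    have h5 : m ≤ ‖z * v r‖ := by
      rw [norm_mul, hrm]
      nlinarith [hmpos.le]
    have h6 : (∑ r', W (Sum.inl r) (Sum.inl r') * m) ≤ m := by
      rw [← Finset.sum_mul]
      nlinarith [hmpos.le]
    rw [heig r] at h5
    have e3 : ∑ r', W (Sum.inl r) (Sum.inl r') * ‖v r'‖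
        = ∑ r', W (Sum.inl r) (Sum.inl r') * m := le_antisymm h3 (by linarith)
    have e6 : (∑ r', W (Sum.inl r) (Sum.inl r') * m) = m := le_antisymm h6 (by linarith)
    have hsumR : ∑ r', W (Sum.inl r) (Sum.inl r') = 1 := by
      rw [← Finset.sum_mul] at e6
      exact mul_right_cancel₀ (ne_of_gt hmpos) (e6.trans (one_mul m).symm)
    have hS0 : ∑ s, W (Sum.inl r) (Sum.inr s) = 0 := by linarith
    constructor
    · intro s
      exact (Finset.sum_eq_zero_iff_of_nonneg fun s _ => hnn _ _).1 hS0 s (Finset.mem_univ s)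
    · intro r' hpos
      have hzero : ∑ r', W (Sum.inl r) (Sum.inl r') * (m - ‖v r'‖) = 0 := by
        simp only [mul_sub]
        rw [Finset.sum_sub_distrib, e3]
        ring
      have := (Finset.sum_eq_zero_iff_of_nonneg fun r' _ =>
        mul_nonneg (hnn _ _) (by linarith [hr0 r' (Finset.mem_univ r')])).1 hzero r'
        (Finset.mem_univ r')
      have h7 : m - ‖v r'‖ = 0 := by
        rcases mul_eq_zero.1 this with h | h
        · exact absurd h (ne_of_gt hpos)
        · exact h
      linarith
  -- reachable nodes from r0 stay in R with max modulus
  have reach : ∀ x, Relation.ReflTransGen (fun i j => 0 < W i j) (Sum.inl r0) x →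
      ∃ r', x = Sum.inl r' ∧ ‖v r'‖ = m := by
    intro x hx
    induction hx with
    | refl => exact ⟨r0, rfl, rfl⟩
    | @tail b y hab hbc ih =>
      obtain ⟨r', rfl, hr'⟩ := ih
      cases y with
      | inl r'' => exact ⟨r'', rfl, (key r' hr').2 r'' hbc⟩
      | inr s => exact absurd ((key r' hr').1 s) (ne_of_gt hbc)
  obtain ⟨s, hs⟩ := hpath r0
  obtain ⟨r', hr', -⟩ := reach _ hs
  exact Sum.inr_ne_inl hr'
end
end

section
/- Under the assumptions of the previous block structure (W = [[W^R, W^S],[0, I]] right stochastic, every regular node has a directed path in the positivity graph of W to a stubborn node), the iteration x_{n+1} = W x_n with fixed stubborn block x^S converges, for any initial regular block x₀^R, to the limit whose regular block is (I − W^R)^{-1} W^S x^S; in particular the limit is independent of x₀^R. -/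
open Finset Filter

noncomputable section

/-- Convergence of linear gossip with stubborn agents: under the block
structure `W = [[W^R, W^S],[0, I]]` (right stochastic, every regular node has a
directed path in the positivity graph to a stubborn node), the iteration
`x_{n+1} = W x_n` with fixed stubborn block `x^S` has regular block converging
to `(I - W^R)⁻¹ W^S x^S`, independently of the initial regular block. -/
theorem stubborn_gossip_convergence
    {R S : Type*} [Fintype R] [Fintype S] [DecidableEq R] [DecidableEq S]
    (W : Matrix (R ⊕ S) (R ⊕ S) ℝ)
    (hnn : ∀ i j, 0 ≤ W i j) (hle : ∀ i j, W i j ≤ 1)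
    (hrow : ∀ i, ∑ j, W i j = 1)
    (hblock0 : ∀ (s : S) (r : R), W (Sum.inr s) (Sum.inl r) = 0)
    (hblockI : ∀ s s' : S, W (Sum.inr s) (Sum.inr s') = if s = s' then 1 else 0)
    (hpath : ∀ r : R, ∃ s : S,
      Relation.ReflTransGen (fun i j => 0 < W i j) (Sum.inl r) (Sum.inr s))
    (x : ℕ → (R ⊕ S) → ℝ) (xS : S → ℝ)
    (hinit : ∀ s : S, x 0 (Sum.inr s) = xS s)
    (hiter : ∀ n, x (n + 1) = W.mulVec (x n)) :
    Tendsto (fun n => fun r : R => x n (Sum.inl r)) atTop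
      (nhds (((1 - W.submatrix Sum.inl Sum.inl)⁻¹
        * W.submatrix Sum.inl Sum.inr).mulVec xS)) := by
  classical
  rcases isEmpty_or_nonempty R with hR | hR
  · have h : (fun n => fun r : R => x n (Sum.inl r)) =
        fun _ => (((1 - W.submatrix Sum.inl Sum.inl)⁻¹
          * W.submatrix Sum.inl Sum.inr).mulVec xS) := by
      funext n r; exact (IsEmpty.false r).elim
    rw [h]; exact tendsto_const_nhds
  set WR := W.submatrix Sum.inl Sum.inl with hWRdef
  set WS := W.submatrix Sum.inl Sum.inr with hWSdef
  have hWRnn : ∀ r t : R, 0 ≤ WR r t := fun r t => hnn _ _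
  have hWSnn : ∀ (r : R) (s : S), 0 ≤ WS r s := fun r s => hnn _ _
  have hrow1 : ∀ r : R, (∑ t, WR r t) + (∑ s, WS r s) = 1 := by
    intro r
    have := hrow (Sum.inl r)
    rwa [Fintype.sum_sum_type] at this
  have hrowle : ∀ r : R, ∑ t, WR r t ≤ 1 := by
    intro r
    have h2 : 0 ≤ ∑ s, WS r s := Finset.sum_nonneg fun s _ => hWSnn r s
    linarith [hrow1 r]
  -- nonnegativity of powers
  have hpownn : ∀ (n : ℕ) (r t : R), 0 ≤ (WR ^ n) r t := by
    intro n
    induction n with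
    | zero => intro r t; simp [Matrix.one_apply]; positivity
    | succ n ih =>
        intro r t
        rw [pow_succ', Matrix.mul_apply]
        exact Finset.sum_nonneg fun u _ => mul_nonneg (hWRnn r u) (ih u t)
  -- row sums of powers
  set f : ℕ → R → ℝ := fun n r => ∑ t, (WR ^ n) r t with hfdef
  have hfnn : ∀ n r, 0 ≤ f n r := fun n r =>
    Finset.sum_nonneg fun t _ => hpownn n r t
  have hf0 : ∀ r, f 0 r = 1 := by intro r; simp [hfdef, Matrix.one_apply]
  have hf1 : ∀ r, f 1 r = ∑ t, WR r t := by intro r; simp [hfdef]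
  have hfadd : ∀ m n r, f (m + n) r = ∑ t, (WR ^ m) r t * f n t := by
    intro m n r
    simp only [hfdef, pow_add, Matrix.mul_apply]
    rw [Finset.sum_comm]
    exact Finset.sum_congr rfl fun u _ => (Finset.mul_sum _ _ _).symm
  have hfsucc : ∀ n r, f (n + 1) r = ∑ t, WR r t * f n t := by
    intro n r
    have := hfadd 1 n r
    rw [add_comm 1 n] at this
    simpa using this
  have hfle1 : ∀ n r, f n r ≤ 1 := by
    intro n
    induction n with
    | zero => intro r; simp [hf0]
    | succ n ih =>
        intro r
        rw [hfsucc]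
        calc ∑ t, WR r t * f n t ≤ ∑ t, WR r t := by
              refine Finset.sum_le_sum fun t _ => ?_
              exact mul_le_of_le_one_right (hWRnn r t) (ih t)
          _ ≤ 1 := hrowle r
  have hfanti : ∀ r, Antitone fun n => f n r := by
    intro r
    have key : ∀ n r, f (n + 1) r ≤ f n r := by
      intro n
      induction n with
      | zero => intro r; rw [hf0]; exact hfle1 1 r
      | succ n ih =>
          intro r
          rw [hfsucc (n+1) r, hfsucc n r]
          exact Finset.sum_le_sum fun t _ =>
            mul_le_mul_of_nonneg_left (ih t) (hWRnn r t)
    exact antitone_nat_of_succ_le fun n => key n r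
  -- every regular node eventually has row sum < 1
  have hkey : ∀ r : R, ∃ k, f k r < 1 := by
    intro r
    obtain ⟨s, hp⟩ := hpath r
    suffices H : ∀ a : R ⊕ S,
        Relation.ReflTransGen (fun i j => 0 < W i j) a (Sum.inr s) →
        ∀ r' : R, a = Sum.inl r' → ∃ k, f k r' < 1 by
      exact H _ hp r rfl
    intro a hp
    induction hp using Relation.ReflTransGen.head_induction_on with
      | refl => intro r' h; exact absurd h (by simp)
      | head h' htail ih =>
          rename_i a c
          intro r' ha
          subst ha
          cases c with
          | inl r'' =>
              obtain ⟨k, hk⟩ := ih r'' rfl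
              refine ⟨k + 1, ?_⟩
              rw [hfsucc]
              have hlt : ∑ t, WR r' t * f k t < ∑ t, WR r' t := by
                refine Finset.sum_lt_sum
                  (fun t _ => mul_le_of_le_one_right (hWRnn r' t) (hfle1 k t))
                  ⟨r'', Finset.mem_univ _, ?_⟩
                have hpos : 0 < WR r' r'' := h'
                calc WR r' r'' * f k r'' < WR r' r'' * 1 :=
                      mul_lt_mul_of_pos_left hk hpos
                  _ = WR r' r'' := mul_one _
              exact lt_of_lt_of_le hlt (hrowle r')
          | inr s' =>
              refine ⟨1, ?_⟩
              rw [hf1]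
              have hpos : 0 < WS r' s' := h'
              have hsum : WS r' s' ≤ ∑ s, WS r' s :=
                Finset.single_le_sum (fun s _ => hWSnn r' s) (Finset.mem_univ s')
              linarith [hrow1 r']
  -- uniform K with f K r < 1 for all r
  obtain ⟨K, hK⟩ : ∃ K, ∀ r, f K r < 1 := by
    choose k hk using hkey
    refine ⟨Finset.univ.sup k, fun r => lt_of_le_of_lt ?_ (hk r)⟩
    exact hfanti r (Finset.le_sup (Finset.mem_univ r))
  set K1 := K + 1 with hK1def
  have hK1pos : 0 < K1 := Nat.succ_pos K
  set c : ℝ := Finset.univ.sup' (Finset.univ_nonempty (α := R)) (f K1) with hcdef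
  have hcle : ∀ r, f K1 r ≤ c := fun r => Finset.le_sup' _ (Finset.mem_univ r)
  have hc1 : c < 1 := by
    rw [hcdef, Finset.sup'_lt_iff]
    exact fun r _ => lt_of_le_of_lt (hfanti r (Nat.le_succ K)) (hK r)
  have hc0 : 0 ≤ c := le_trans (hfnn K1 hR.some) (hcle hR.some)
  -- geometric decay along multiples of K1
  have hgeo : ∀ (j : ℕ) (r : R), f (j * K1) r ≤ c ^ j := by
    intro j
    induction j with
    | zero => intro r; simp [hf0]
    | succ j ih =>
        intro r
        have h1 : (j + 1) * K1 = K1 + j * K1 := by ring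
        rw [h1, hfadd]
        calc ∑ t, (WR ^ K1) r t * f (j * K1) t
            ≤ ∑ t, (WR ^ K1) r t * c ^ j := by
              refine Finset.sum_le_sum fun t _ => ?_
              exact mul_le_mul_of_nonneg_left (ih t) (hpownn K1 r t)
          _ = f K1 r * c ^ j := by rw [← Finset.sum_mul]
          _ ≤ c * c ^ j := by
              exact mul_le_mul_of_nonneg_right (hcle r) (pow_nonneg hc0 j)
          _ = c ^ (j + 1) := by rw [pow_succ']
  -- f tends to 0
  have hdivtop : Tendsto (fun n : ℕ => n / K1) atTop atTop := by
    refine tendsto_atTop_atTop.mpr fun b => ⟨b * K1, fun n hn => ?_⟩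
    exact (Nat.le_div_iff_mul_le hK1pos).mpr hn
  have hftend : ∀ r, Tendsto (fun n => f n r) atTop (nhds 0) := by
    intro r
    refine squeeze_zero (g := fun n => c ^ (n / K1)) (fun n => hfnn n r) (fun n => ?_) ?_
    · show f n r ≤ c ^ (n / K1)
      calc f n r ≤ f (n / K1 * K1) r := hfanti r (Nat.div_mul_le_self n K1)
        _ ≤ c ^ (n / K1) := hgeo (n / K1) r
    · exact (tendsto_pow_atTop_nhds_zero_of_lt_one hc0 hc1).comp hdivtop
  -- entries of powers tend to 0
  have hentry : ∀ r t, Tendsto (fun n => (WR ^ n) r t) atTop (nhds 0) := by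
    intro r t
    refine squeeze_zero (fun n => hpownn n r t) (fun n => ?_) (hftend r)
    exact Finset.single_le_sum (fun u _ => hpownn n r u) (Finset.mem_univ t)
  have hmulVec0 : ∀ (v : R → ℝ) (r : R),
      Tendsto (fun n => ((WR ^ n).mulVec v) r) atTop (nhds 0) := by
    intro v r
    have : ∀ n, ((WR ^ n).mulVec v) r = ∑ t, (WR ^ n) r t * v t := fun n => rfl
    simp only [this]
    have := tendsto_finset_sum (f := fun (t : R) (n : ℕ) => (WR ^ n) r t * v t)
      (a := fun _ => 0) Finset.univ
      (fun t _ => by simpa using (hentry r t).mul_const (v t))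
    simpa using this
  -- the stubborn block is constant
  have hSfix : ∀ n s, x n (Sum.inr s) = xS s := by
    intro n
    induction n with
    | zero => exact hinit
    | succ n ih =>
        intro s
        rw [hiter n]
        show ∑ j, W (Sum.inr s) j * x n j = xS s
        rw [Fintype.sum_sum_type]
        simp only [hblock0, hblockI, zero_mul, Finset.sum_const_zero, ite_mul,
          one_mul, zero_mul, zero_add, Finset.sum_ite_eq, Finset.mem_univ,
          if_true]
        exact ih s
  -- regular block recursion
  set y : ℕ → R → ℝ := fun n r => x n (Sum.inl r) with hydef
  set b : R → ℝ := WS.mulVec xS with hbdef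
  have hyrec : ∀ n, y (n + 1) = WR.mulVec (y n) + b := by
    intro n
    funext r
    show x (n + 1) (Sum.inl r) = WR.mulVec (y n) r + b r
    rw [hiter n]
    show ∑ j, W (Sum.inl r) j * x n j = _
    calc ∑ j, W (Sum.inl r) j * x n j
        = (∑ t, W (Sum.inl r) (Sum.inl t) * x n (Sum.inl t))
          + ∑ s, W (Sum.inl r) (Sum.inr s) * xS s := by
            rw [Fintype.sum_sum_type]
            simp only [hSfix n]
      _ = WR.mulVec (y n) r + b r := rfl
  -- invertibility of 1 - WR
  have hdet : IsUnit (1 - WR).det := by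
    rw [isUnit_iff_ne_zero]
    intro h
    obtain ⟨v, hv0, hv⟩ := Matrix.exists_mulVec_eq_zero_iff.mpr h
    have hfix : WR.mulVec v = v := by
      rw [Matrix.sub_mulVec, Matrix.one_mulVec, sub_eq_zero] at hv
      exact hv.symm
    have hn : ∀ n, (WR ^ n).mulVec v = v := by
      intro n
      induction n with
      | zero => simp [Matrix.one_mulVec]
      | succ n ih =>
          rw [pow_succ', ← Matrix.mulVec_mulVec, ih, hfix]
    apply hv0
    funext r
    have h1 : Tendsto (fun n => ((WR ^ n).mulVec v) r) atTop (nhds 0) :=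
      hmulVec0 v r
    have h2 : Tendsto (fun n => ((WR ^ n).mulVec v) r) atTop (nhds (v r)) := by
      simp only [hn]; exact tendsto_const_nhds
    exact tendsto_nhds_unique h2 h1
  -- the limit point
  set z : R → ℝ := ((1 - WR)⁻¹ * WS).mulVec xS with hzdef
  have hz : WR.mulVec z + b = z := by
    have h1 : (1 - WR).mulVec z = b := by
      rw [hzdef, Matrix.mulVec_mulVec, ← Matrix.mul_assoc,
        Matrix.mul_nonsing_inv _ hdet, Matrix.one_mul, hbdef]
    rw [Matrix.sub_mulVec, Matrix.one_mulVec] at h1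
    have := congrArg (fun w => WR.mulVec z + w) h1
    simpa using this.symm
  -- closed form for y
  have hform : ∀ n, y n = z + (WR ^ n).mulVec (y 0 - z) := by
    intro n
    induction n with
    | zero => simp [Matrix.one_mulVec]
    | succ n ih =>
        rw [hyrec n, ih, Matrix.mulVec_add, pow_succ', ← Matrix.mulVec_mulVec]
        funext r
        have := congrFun hz r
        simp only [Pi.add_apply] at this ⊢
        linarith
  -- conclude
  show Tendsto (fun n => y n) atTop (nhds z)
  rw [tendsto_pi_nhds]
  intro r
  have hyr : ∀ n, y n r = z r + ((WR ^ n).mulVec (y 0 - z)) r := fun n => by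
    rw [hform n]; rfl
  simp only [hyr]
  have h := (hmulVec0 (y 0 - z) r).const_add (z r)
  simpa using h
end
end
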